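/- arXiv:2003.03664 — 3 statements merged into one kernel-verified Lean document; each statement's English description precedes it below -/
import Mathlib

section
/- Let f : [0,1] → [0,1] be measurable with F(x) = ∫₀^x f(t)dt. Then for all i, j ∈ ℕ, ∫₀¹ x^i F(x)^j dx = (i! j!/(i+j+1)!) ∑_{u ∈ {0,1}^{i+j+1}, u₁+⋯+u_{i+j} ≥ j} C(u₁+⋯+u_{i+j}, j) t(u, f). -/
open MeasureTheory

/-- Density of the binary word `u` in the function `f : [0,1] → [0,1]`:
`t(u,f) = ℓ! ∫_{0 ≤ x₁ < ⋯ < x_ℓ ≤ 1} ∏ f^{uᵢ}(xᵢ) dx`. -/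
noncomputable def wordDensity {ℓ : ℕ} (u : Fin ℓ → Bool) (f : ℝ → ℝ) : ℝ :=
  (Nat.factorial ℓ : ℝ) *
    ∫ x : Fin ℓ → ℝ in
      {x | (∀ i, x i ∈ Set.Icc (0:ℝ) 1) ∧ (∀ i j : Fin ℓ, i < j → x i < x j)},
      ∏ i, (if u i then f (x i) else 1 - f (x i))

/-- The interval (cut) distance `d_□(f,g) = sup_{I ⊆ [0,1] interval} |∫_I (f-g)|`. -/
noncomputable def cutDist (f g : ℝ → ℝ) : ℝ :=
  sSup {y | ∃ a b : ℝ, 0 ≤ a ∧ a ≤ b ∧ b ≤ 1 ∧ y = |∫ x in a..b, (f x - g x)|}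

namespace S12

/-- simplex set -/
def simSet (ℓ : ℕ) (b : ℝ) : Set (Fin ℓ → ℝ) :=
  {x | (∀ i, x i ∈ Set.Icc (0:ℝ) b) ∧ (∀ i j : Fin ℓ, i < j → x i < x j)}

noncomputable def simInt {ℓ : ℕ} (g : Fin ℓ → ℝ → ℝ) (b : ℝ) : ℝ :=
  ∫ x in simSet ℓ b, ∏ i, g i (x i)

def Nice {ℓ : ℕ} (g : Fin ℓ → ℝ → ℝ) : Prop :=
  (∀ i, Measurable (g i)) ∧ ∀ i t, g i t ∈ Set.Icc (0:ℝ) 1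

lemma measurableSet_simSet (ℓ : ℕ) (b : ℝ) : MeasurableSet (simSet ℓ b) := by
  have h1 : MeasurableSet {x : Fin ℓ → ℝ | ∀ i, x i ∈ Set.Icc (0:ℝ) b} := by
    have : {x : Fin ℓ → ℝ | ∀ i, x i ∈ Set.Icc (0:ℝ) b} =
        ⋂ i, (fun x : Fin ℓ → ℝ => x i) ⁻¹' Set.Icc (0:ℝ) b := by
      ext x; simp [Set.mem_iInter]
    rw [this]
    exact MeasurableSet.iInter fun i => (measurable_pi_apply i) measurableSet_Icc
  have h2 : MeasurableSet {x : Fin ℓ → ℝ | ∀ i j : Fin ℓ, i < j → x i < x j} := by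
    have : {x : Fin ℓ → ℝ | ∀ i j : Fin ℓ, i < j → x i < x j} =
        ⋂ (i) (j) (_ : i < j), {x : Fin ℓ → ℝ | x i < x j} := by
      ext x; simp [Set.mem_iInter]
    rw [this]
    exact MeasurableSet.iInter fun i => MeasurableSet.iInter fun j =>
      MeasurableSet.iInter fun _ => measurableSet_lt (measurable_pi_apply i) (measurable_pi_apply j)
  exact h1.inter h2

lemma simSet_subset_cube {ℓ : ℕ} {b : ℝ} (hb : b ≤ 1) :
    simSet ℓ b ⊆ Set.pi Set.univ (fun _ : Fin ℓ => Set.Icc (0:ℝ) 1) := by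
  intro x hx i _
  exact ⟨(hx.1 i).1, le_trans (hx.1 i).2 hb⟩

lemma volume_simSet_le {ℓ : ℕ} {b : ℝ} (hb : b ≤ 1) : volume (simSet ℓ b) ≤ 1 := by
  refine le_trans (measure_mono (simSet_subset_cube hb)) ?_
  rw [volume_pi_pi]
  simp

lemma prod_mem_Icc {ℓ : ℕ} {g : Fin ℓ → ℝ → ℝ} (hg : Nice g) (x : Fin ℓ → ℝ) :
    (∏ i, g i (x i)) ∈ Set.Icc (0:ℝ) 1 :=
  ⟨Finset.prod_nonneg fun i _ => (hg.2 i (x i)).1,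
   Finset.prod_le_one (fun i _ => (hg.2 i (x i)).1) (fun i _ => (hg.2 i (x i)).2)⟩

lemma measurable_simProd {ℓ : ℕ} {g : Fin ℓ → ℝ → ℝ} (hg : Nice g) :
    Measurable (fun x : Fin ℓ → ℝ => ∏ i, g i (x i)) :=
  Finset.measurable_prod _ fun i _ => (hg.1 i).comp (measurable_pi_apply i)

lemma integrableOn_simProd {ℓ : ℕ} {g : Fin ℓ → ℝ → ℝ} (hg : Nice g) {b : ℝ} (hb : b ≤ 1) :
    IntegrableOn (fun x : Fin ℓ → ℝ => ∏ i, g i (x i)) (simSet ℓ b) := by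
  refine Integrable.mono'
    ((integrableOn_const_iff (C := (1:ℝ))).2 (Or.inr (lt_of_le_of_lt (volume_simSet_le hb) (by norm_num))))
    ((measurable_simProd hg).aestronglyMeasurable.restrict) ?_
  refine Filter.Eventually.of_forall fun x => ?_
  rw [Real.norm_eq_abs, abs_of_nonneg (prod_mem_Icc hg x).1]
  exact (prod_mem_Icc hg x).2

lemma simInt_nonneg {ℓ : ℕ} {g : Fin ℓ → ℝ → ℝ} (hg : Nice g) (b : ℝ) : 0 ≤ simInt g b :=
  setIntegral_nonneg (measurableSet_simSet _ _) fun x _ => (prod_mem_Icc hg x).1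

lemma simInt_le_one {ℓ : ℕ} {g : Fin ℓ → ℝ → ℝ} (hg : Nice g) {b : ℝ} (hb : b ≤ 1) :
    simInt g b ≤ 1 := by
  have := norm_setIntegral_le_of_norm_le_const (C := 1)
    (lt_of_le_of_lt (volume_simSet_le (ℓ := ℓ) hb) (by norm_num))
    (fun x _ => by
      rw [Real.norm_eq_abs, abs_of_nonneg (prod_mem_Icc hg x).1]; exact (prod_mem_Icc hg x).2)
  rw [Real.norm_eq_abs] at this
  have h2 : (volume (simSet ℓ b)).toReal ≤ 1 := by
    refine ENNReal.toReal_le_of_le_ofReal (by norm_num) ?_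
    simpa using volume_simSet_le (ℓ := ℓ) hb
  calc simInt g b ≤ |simInt g b| := le_abs_self _
    _ ≤ 1 * (volume (simSet ℓ b)).toReal := by simpa [mul_comm, measureReal_def, simInt] using this
    _ ≤ 1 := by simpa using h2

lemma simInt_mono' {ℓ : ℕ} {g : Fin ℓ → ℝ → ℝ} (hg : Nice g) {a b : ℝ} (hab : a ≤ b)
    (hb : b ≤ 1) : simInt g a ≤ simInt g b := by
  refine setIntegral_mono_set (integrableOn_simProd hg hb)
    (Filter.Eventually.of_forall fun x => (prod_mem_Icc hg x).1) ?_
  refine Filter.Eventually.of_forall ?_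
  intro x hx
  exact ⟨fun i => ⟨(hx.1 i).1, le_trans (hx.1 i).2 hab⟩, hx.2⟩

lemma simInt_clamp_mono {ℓ : ℕ} {g : Fin ℓ → ℝ → ℝ} (hg : Nice g) :
    Monotone (fun t => simInt g (min t 1)) := by
  intro s t hst
  exact simInt_mono' hg (min_le_min_right 1 hst) (min_le_right _ _)

lemma intervalIntegrable_mul_simInt {ℓ : ℕ} {g : Fin ℓ → ℝ → ℝ} (hg : Nice g)
    {w : ℝ → ℝ} (hw : Measurable w) (hw1 : ∀ t, w t ∈ Set.Icc (0:ℝ) 1)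
    {b : ℝ} (hb0 : 0 ≤ b) (hb1 : b ≤ 1) :
    IntervalIntegrable (fun t => w t * simInt g t) volume 0 b := by
  rw [intervalIntegrable_iff_integrableOn_Ioc_of_le hb0]
  have heq : Set.EqOn (fun t => w t * simInt g t) (fun t => w t * simInt g (min t 1)) (Set.Ioc 0 b) := by
    intro t ht
    simp only
    rw [min_eq_left (le_trans ht.2 hb1)]
  refine (IntegrableOn.congr_fun ?_ heq.symm measurableSet_Ioc)
  refine Integrable.mono' (integrable_const (1:ℝ))
    ((hw.mul ((simInt_clamp_mono hg).measurable)).aestronglyMeasurable.restrict) ?_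
  refine (ae_restrict_iff' measurableSet_Ioc).2 (Filter.Eventually.of_forall fun t ht => ?_)
  have h1 := hw1 t
  have h2 : 0 ≤ simInt g (min t 1) := simInt_nonneg hg _
  have h3 : simInt g (min t 1) ≤ 1 := simInt_le_one hg (min_le_right _ _)
  rw [Real.norm_eq_abs, abs_of_nonneg (mul_nonneg h1.1 h2)]
  exact mul_le_one₀ h1.2 h2 h3



lemma boundedIntegrableOn {w : ℝ → ℝ} {s : Set ℝ} (hs : MeasurableSet s) (hvol : volume s < ⊤)
    (hw : Measurable w) {C : ℝ} (hbd : ∀ t ∈ s, |w t| ≤ C) : IntegrableOn w s := by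
  refine Integrable.mono' ((integrableOn_const_iff (C := C)).2 (Or.inr hvol))
    hw.aestronglyMeasurable.restrict ?_
  exact (ae_restrict_iff' hs).2 (Filter.Eventually.of_forall fun t ht => by
    rw [Real.norm_eq_abs]; exact hbd t ht)

lemma iic_primitive_eq {w : ℝ → ℝ} (hw : Integrable w) (t : ℝ) :
    ∫ x in Set.Iic t, w x = (∫ x in Set.Iic 0, w x) + ∫ x in (0:ℝ)..t, w x := by
  rcases le_or_gt 0 t with h | h
  · rw [intervalIntegral.integral_of_le h,
      ← setIntegral_union (Set.Iic_disjoint_Ioc le_rfl) measurableSet_Ioc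
        hw.integrableOn hw.integrableOn, Set.Iic_union_Ioc_eq_Iic h]
  · have h1 : ∫ x in Set.Iic (0:ℝ), w x
        = (∫ x in Set.Iic t, w x) + ∫ x in Set.Ioc t 0, w x := by
      rw [← setIntegral_union (Set.Iic_disjoint_Ioc le_rfl) measurableSet_Ioc
        hw.integrableOn hw.integrableOn, Set.Iic_union_Ioc_eq_Iic h.le]
    rw [intervalIntegral.integral_symm, intervalIntegral.integral_of_le h.le]
    linarith

lemma mul_primitive {u v : ℝ → ℝ} {b Cu Cv : ℝ} (hu : Measurable u) (hv : Measurable v)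
    (hb0 : 0 ≤ b)
    (hub : ∀ t ∈ Set.Ioc (0:ℝ) b, |u t| ≤ Cu) (hvb : ∀ t ∈ Set.Ioc (0:ℝ) b, |v t| ≤ Cv) :
    (∫ s in (0:ℝ)..b, u s) * (∫ t in (0:ℝ)..b, v t)
      = ∫ t in (0:ℝ)..b,
          (u t * (∫ s in (0:ℝ)..t, v s) + (∫ s in (0:ℝ)..t, u s) * v t) := by
  set uI := (Set.Ioc (0:ℝ) b).indicator u with huIdef
  set vI := (Set.Ioc (0:ℝ) b).indicator v with hvIdef
  have hmuI : Measurable uI := hu.indicator measurableSet_Ioc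
  have hmvI : Measurable vI := hv.indicator measurableSet_Ioc
  have hIuI : Integrable uI := by
    rw [huIdef, integrable_indicator_iff measurableSet_Ioc]
    exact boundedIntegrableOn measurableSet_Ioc measure_Ioc_lt_top hu hub
  have hIvI : Integrable vI := by
    rw [hvIdef, integrable_indicator_iff measurableSet_Ioc]
    exact boundedIntegrableOn measurableSet_Ioc measure_Ioc_lt_top hv hvb
  set U' := fun t : ℝ => ∫ x in Set.Iic t, uI x with hU'def
  set V' := fun t : ℝ => ∫ x in Set.Iic t, vI x with hV'def
  have hU'cont : Continuous U' := by
    have h := hIuI.continuous_primitive 0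
    have : U' = fun t => (∫ x in Set.Iic 0, uI x) + ∫ x in (0:ℝ)..t, uI x :=
      funext fun t => iic_primitive_eq hIuI t
    rw [this]; exact continuous_const.add h
  have hV'cont : Continuous V' := by
    have h := hIvI.continuous_primitive 0
    have : V' = fun t => (∫ x in Set.Iic 0, vI x) + ∫ x in (0:ℝ)..t, vI x :=
      funext fun t => iic_primitive_eq hIvI t
    rw [this]; exact continuous_const.add h
  -- bounds on primitives
  have hV'bd : ∀ t, |V' t| ≤ ∫ x, |vI x| := by
    intro t
    calc |V' t| ≤ ∫ x in Set.Iic t, |vI x| := by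
          simpa [Real.norm_eq_abs] using
            norm_integral_le_integral_norm (μ := volume.restrict (Set.Iic t)) vI
      _ ≤ ∫ x, |vI x| := setIntegral_le_integral hIvI.abs
          (Filter.Eventually.of_forall fun x => abs_nonneg _)
  have hU'bd : ∀ t, |U' t| ≤ ∫ x, |uI x| := by
    intro t
    calc |U' t| ≤ ∫ x in Set.Iic t, |uI x| := by
          simpa [Real.norm_eq_abs] using
            norm_integral_le_integral_norm (μ := volume.restrict (Set.Iic t)) uI
      _ ≤ ∫ x, |uI x| := setIntegral_le_integral hIuI.abs
          (Filter.Eventually.of_forall fun x => abs_nonneg _)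
  have hCv' : (0:ℝ) ≤ ∫ x, |vI x| := integral_nonneg fun x => abs_nonneg _
  have hCu' : (0:ℝ) ≤ ∫ x, |uI x| := integral_nonneg fun x => abs_nonneg _
  -- key primitive identities on Ioc 0 b
  have keyV : ∀ t ∈ Set.Ioc (0:ℝ) b, V' t = ∫ x in (0:ℝ)..t, v x := by
    intro t ht
    rw [hV'def]
    simp only
    rw [iic_primitive_eq hIvI t]
    have h0 : ∫ x in Set.Iic (0:ℝ), vI x = 0 := by
      rw [setIntegral_congr_fun measurableSet_Iic (g := fun _ => (0:ℝ))
        (fun x hx => Set.indicator_of_notMem (fun hc => absurd hc.1 (not_lt.2 hx)) v)]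
      simp
    have h1 : ∫ x in (0:ℝ)..t, vI x = ∫ x in (0:ℝ)..t, v x := by
      rw [intervalIntegral.integral_of_le ht.1.le, intervalIntegral.integral_of_le ht.1.le]
      exact setIntegral_congr_fun measurableSet_Ioc
        (fun x hx => Set.indicator_of_mem (Set.mem_Ioc.2 ⟨(Set.mem_Ioc.1 hx).1,
          (Set.mem_Ioc.1 hx).2.trans ht.2⟩) v)
    rw [h0, h1, zero_add]
  have keyU : ∀ t ∈ Set.Ioc (0:ℝ) b, U' t = ∫ x in (0:ℝ)..t, u x := by
    intro t ht
    rw [hU'def]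
    simp only
    rw [iic_primitive_eq hIuI t]
    have h0 : ∫ x in Set.Iic (0:ℝ), uI x = 0 := by
      rw [setIntegral_congr_fun measurableSet_Iic (g := fun _ => (0:ℝ))
        (fun x hx => Set.indicator_of_notMem (fun hc => absurd hc.1 (not_lt.2 hx)) u)]
      simp
    have h1 : ∫ x in (0:ℝ)..t, uI x = ∫ x in (0:ℝ)..t, u x := by
      rw [intervalIntegral.integral_of_le ht.1.le, intervalIntegral.integral_of_le ht.1.le]
      exact setIntegral_congr_fun measurableSet_Ioc
        (fun x hx => Set.indicator_of_mem (Set.mem_Ioc.2 ⟨(Set.mem_Ioc.1 hx).1,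
          (Set.mem_Ioc.1 hx).2.trans ht.2⟩) u)
    rw [h0, h1, zero_add]
  -- the two triangle pieces
  set Q₁ := fun p : ℝ × ℝ => if p.2 ≤ p.1 then uI p.1 * vI p.2 else 0 with hQ₁def
  set Q₂ := fun p : ℝ × ℝ => if p.1 < p.2 then uI p.1 * vI p.2 else 0 with hQ₂def
  have hdom : Integrable (fun p : ℝ × ℝ => |uI p.1| * |vI p.2|) (volume.prod volume) :=
    Integrable.mul_prod hIuI.abs hIvI.abs
  have hQ₁m : Measurable Q₁ :=
    Measurable.ite (measurableSet_le measurable_snd measurable_fst)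
      ((hmuI.comp measurable_fst).mul (hmvI.comp measurable_snd)) measurable_const
  have hQ₂m : Measurable Q₂ :=
    Measurable.ite (measurableSet_lt measurable_fst measurable_snd)
      ((hmuI.comp measurable_fst).mul (hmvI.comp measurable_snd)) measurable_const
  have hQ₁i : Integrable Q₁ (volume.prod volume) := by
    refine Integrable.mono' hdom hQ₁m.aestronglyMeasurable
      (Filter.Eventually.of_forall fun p => ?_)
    simp only [hQ₁def, Real.norm_eq_abs]
    split_ifs with h
    · rw [abs_mul]
    · simp only [abs_zero]; positivity
  have hQ₂i : Integrable Q₂ (volume.prod volume) := by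
    refine Integrable.mono' hdom hQ₂m.aestronglyMeasurable
      (Filter.Eventually.of_forall fun p => ?_)
    simp only [hQ₂def, Real.norm_eq_abs]
    split_ifs with h
    · rw [abs_mul]
    · simp only [abs_zero]; positivity
  -- compute ∫ Q₁
  have eQ₁ : ∫ p, Q₁ p ∂(volume.prod volume) = ∫ s, uI s * V' s := by
    rw [integral_prod _ hQ₁i]
    refine integral_congr_ae (Filter.Eventually.of_forall fun s => ?_)
    show (∫ t, Q₁ (s, t)) = uI s * V' s
    have : (fun t => Q₁ (s, t)) = fun t => (Set.Iic s).indicator (fun t => uI s * vI t) t := by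
      funext t
      simp only [hQ₁def, Set.indicator_apply, Set.mem_Iic]
    rw [this, integral_indicator measurableSet_Iic, integral_const_mul]
  have eQ₂ : ∫ p, Q₂ p ∂(volume.prod volume) = ∫ t, U' t * vI t := by
    have hswap : ∫ p, Q₂ p ∂(volume.prod volume)
        = ∫ p, Q₂ p.swap ∂(volume.prod volume) := (integral_prod_swap _).symm
    rw [hswap, integral_prod (fun p : ℝ × ℝ => Q₂ p.swap) (by exact hQ₂i.swap)]
    refine integral_congr_ae (Filter.Eventually.of_forall fun t => ?_)
    show (∫ s, Q₂ ((t, s) : ℝ × ℝ).swap) = U' t * vI t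
    have : (fun s => Q₂ ((t, s) : ℝ × ℝ).swap)
        = fun s => (Set.Iio t).indicator (fun s => uI s * vI t) s := by
      funext s
      simp only [hQ₂def, Set.indicator_apply, Set.mem_Iio, Prod.swap]
    rw [this, integral_indicator measurableSet_Iio]
    have : ∫ s in Set.Iio t, uI s * vI t = ∫ s in Set.Iic t, uI s * vI t := by
      apply setIntegral_congr_set
      exact Iio_ae_eq_Iic
    rw [this, integral_mul_const]
  -- integrability of the pieces on Ioc 0 b
  have hIuV : IntegrableOn (fun t => uI t * V' t) (Set.Ioc 0 b) := by
    refine boundedIntegrableOn measurableSet_Ioc measure_Ioc_lt_top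
      (hmuI.mul hV'cont.measurable) (C := Cu * ∫ x, |vI x|) (fun t ht => ?_)
    rw [abs_mul]
    have hCu0 : (0:ℝ) ≤ Cu := (abs_nonneg (u t)).trans (hub t ht)
    refine mul_le_mul ?_ (hV'bd t) (abs_nonneg _) hCu0
    rw [huIdef]
    simp only [Set.indicator_of_mem ht]
    exact hub t ht
  have hIUv : IntegrableOn (fun t => U' t * vI t) (Set.Ioc 0 b) := by
    refine boundedIntegrableOn measurableSet_Ioc measure_Ioc_lt_top
      (hU'cont.measurable.mul hmvI) (C := (∫ x, |uI x|) * Cv) (fun t ht => ?_)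
    rw [abs_mul]
    refine mul_le_mul (hU'bd t) ?_ (abs_nonneg _) hCu'
    rw [hvIdef]
    simp only [Set.indicator_of_mem ht]
    exact hvb t ht
  -- assemble
  have h1 : ∫ s in (0:ℝ)..b, u s = ∫ s, uI s := by
    rw [intervalIntegral.integral_of_le hb0, huIdef, integral_indicator measurableSet_Ioc]
  have h2 : ∫ t in (0:ℝ)..b, v t = ∫ t, vI t := by
    rw [intervalIntegral.integral_of_le hb0, hvIdef, integral_indicator measurableSet_Ioc]
  have huV : ∫ s, uI s * V' s = ∫ s in Set.Ioc 0 b, uI s * V' s := by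
    rw [← integral_indicator measurableSet_Ioc]
    refine integral_congr_ae (Filter.Eventually.of_forall fun s => ?_)
    by_cases hs : s ∈ Set.Ioc (0:ℝ) b
    · simp only [Set.indicator_of_mem hs]
    · simp only [Set.indicator_of_notMem hs, huIdef, zero_mul]
  have hUv : ∫ t, U' t * vI t = ∫ t in Set.Ioc 0 b, U' t * vI t := by
    rw [← integral_indicator measurableSet_Ioc]
    refine integral_congr_ae (Filter.Eventually.of_forall fun t => ?_)
    by_cases hs : t ∈ Set.Ioc (0:ℝ) b
    · simp only [Set.indicator_of_mem hs]
    · simp only [Set.indicator_of_notMem hs, hvIdef, mul_zero]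
  calc (∫ s in (0:ℝ)..b, u s) * (∫ t in (0:ℝ)..b, v t)
      = (∫ s, uI s) * (∫ t, vI t) := by rw [h1, h2]
    _ = ∫ p, uI p.1 * vI p.2 ∂(volume.prod volume) := (integral_prod_mul uI vI).symm
    _ = ∫ p, (Q₁ p + Q₂ p) ∂(volume.prod volume) := by
        refine integral_congr_ae (Filter.Eventually.of_forall fun p => ?_)
        rw [hQ₁def, hQ₂def]
        rcases le_or_gt p.2 p.1 with h | h
        · simp [h, not_lt.2 h]
        · simp [h, not_le.2 h]
    _ = (∫ p, Q₁ p ∂(volume.prod volume)) + ∫ p, Q₂ p ∂(volume.prod volume) :=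
        integral_add hQ₁i hQ₂i
    _ = (∫ s in Set.Ioc 0 b, uI s * V' s) + ∫ t in Set.Ioc 0 b, U' t * vI t := by
        rw [eQ₁, eQ₂, huV, hUv]
    _ = ∫ t in Set.Ioc 0 b, (uI t * V' t + U' t * vI t) := (integral_add hIuV hIUv).symm
    _ = ∫ t in Set.Ioc 0 b, (u t * (∫ s in (0:ℝ)..t, v s) + (∫ s in (0:ℝ)..t, u s) * v t) := by
        refine setIntegral_congr_fun measurableSet_Ioc (fun t ht => ?_)
        simp only [huIdef, hvIdef, Set.indicator_of_mem ht]
        rw [keyV t ht, keyU t ht]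
    _ = ∫ t in (0:ℝ)..b, (u t * (∫ s in (0:ℝ)..t, v s) + (∫ s in (0:ℝ)..t, u s) * v t) :=
        (intervalIntegral.integral_of_le hb0).symm



lemma boundedIntegrableOn' {w : ℝ → ℝ} {s : Set ℝ} (hs : MeasurableSet s) (hvol : volume s < ⊤)
    (hw : Measurable w) {C : ℝ} (hbd : ∀ t ∈ s, |w t| ≤ C) : IntegrableOn w s := by
  refine Integrable.mono' ((integrableOn_const_iff (C := C)).2 (Or.inr hvol))
    hw.aestronglyMeasurable.restrict ?_
  exact (ae_restrict_iff' hs).2 (Filter.Eventually.of_forall fun t ht => by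
    rw [Real.norm_eq_abs]; exact hbd t ht)


variable {f : ℝ → ℝ}

lemma II (hf : Measurable f) (hf01 : ∀ t, f t ∈ Set.Icc (0:ℝ) 1) (a b : ℝ) :
    IntervalIntegrable f volume a b := by
  rw [intervalIntegrable_iff]
  refine boundedIntegrableOn' measurableSet_uIoc ?_ hf (C := 1)
    (fun t _ => abs_le.2 ⟨by linarith [(hf01 t).1], (hf01 t).2⟩)
  rw [Set.uIoc]
  exact measure_Ioc_lt_top

lemma F_cont (hf : Measurable f) (hf01 : ∀ t, f t ∈ Set.Icc (0:ℝ) 1) :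
    Continuous (fun x => ∫ t in (0:ℝ)..x, f t) :=
  intervalIntegral.continuous_primitive (II hf hf01) 0

lemma F_mem (hf : Measurable f) (hf01 : ∀ t, f t ∈ Set.Icc (0:ℝ) 1) {b : ℝ}
    (hb : b ∈ Set.Icc (0:ℝ) 1) : (∫ t in (0:ℝ)..b, f t) ∈ Set.Icc (0:ℝ) 1 := by
  constructor
  · exact intervalIntegral.integral_nonneg hb.1 (fun u _ => (hf01 u).1)
  · calc (∫ t in (0:ℝ)..b, f t) ≤ ∫ t in (0:ℝ)..b, (1:ℝ) := by
          refine intervalIntegral.integral_mono_on hb.1 (II hf hf01 0 b)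
            intervalIntegrable_const (fun u _ => (hf01 u).2)
      _ = b := by simp
      _ ≤ 1 := hb.2

lemma pow_primitive (hf : Measurable f) (hf01 : ∀ t, f t ∈ Set.Icc (0:ℝ) 1) (n : ℕ) :
    ∀ b ∈ Set.Icc (0:ℝ) 1,
      (∫ t in (0:ℝ)..b, f t) ^ (n + 1)
        = ∫ t in (0:ℝ)..b, ((n:ℝ) + 1) * (∫ s in (0:ℝ)..t, f s) ^ n * f t := by
  induction n with
  | zero =>
    intro b _
    rw [pow_one,
      show (fun t => (((0:ℕ):ℝ) + 1) * (∫ s in (0:ℝ)..t, f s) ^ 0 * f t) = f from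
        funext fun t => by simp]
  | succ n ih =>
    intro b hb
    have hv : Measurable (fun t => ((n:ℝ) + 1) * (∫ s in (0:ℝ)..t, f s) ^ n * f t) :=
      (measurable_const.mul ((F_cont hf hf01).measurable.pow_const n)).mul hf
    have hub : ∀ t ∈ Set.Ioc (0:ℝ) b, |f t| ≤ 1 := fun t _ =>
      abs_le.2 ⟨by linarith [(hf01 t).1], (hf01 t).2⟩
    have hvb : ∀ t ∈ Set.Ioc (0:ℝ) b, |((n:ℝ) + 1) * (∫ s in (0:ℝ)..t, f s) ^ n * f t|
        ≤ (n:ℝ) + 1 := by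
      intro t ht
      have htI : t ∈ Set.Icc (0:ℝ) 1 := ⟨ht.1.le, ht.2.trans hb.2⟩
      have hF := F_mem hf hf01 htI
      have hft := hf01 t
      rw [abs_mul, abs_mul]
      have h1 : |((n:ℝ) + 1)| = (n:ℝ) + 1 := abs_of_nonneg (by positivity)
      have h2 : |(∫ s in (0:ℝ)..t, f s) ^ n| ≤ 1 := by
        rw [abs_pow]
        exact pow_le_one₀ (abs_nonneg _) (abs_le.2 ⟨by linarith [hF.1], hF.2⟩)
      have h3 : |f t| ≤ 1 := abs_le.2 ⟨by linarith [hft.1], hft.2⟩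
      calc |((n:ℝ) + 1)| * |(∫ s in (0:ℝ)..t, f s) ^ n| * |f t|
          ≤ ((n:ℝ) + 1) * 1 * 1 := by
            rw [h1]
            refine mul_le_mul (mul_le_mul le_rfl h2 (abs_nonneg _) (by positivity)) h3
              (abs_nonneg _) (by positivity)
        _ = (n:ℝ) + 1 := by ring
    have hK := mul_primitive (b := b) hf hv hb.1 hub hvb
    calc (∫ t in (0:ℝ)..b, f t) ^ (n + 1 + 1)
        = (∫ t in (0:ℝ)..b, f t) * (∫ t in (0:ℝ)..b, f t) ^ (n + 1) := (pow_succ' _ _)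
      _ = (∫ t in (0:ℝ)..b, f t)
            * ∫ t in (0:ℝ)..b, ((n:ℝ) + 1) * (∫ s in (0:ℝ)..t, f s) ^ n * f t := by
          rw [ih b hb]
      _ = ∫ t in (0:ℝ)..b,
            (f t * (∫ s in (0:ℝ)..t, ((n:ℝ) + 1) * (∫ x in (0:ℝ)..s, f x) ^ n * f s)
              + (∫ s in (0:ℝ)..t, f s)
                * (((n:ℝ) + 1) * (∫ s in (0:ℝ)..t, f s) ^ n * f t)) := hK
      _ = ∫ t in (0:ℝ)..b, ((↑(n + 1):ℝ) + 1) * (∫ s in (0:ℝ)..t, f s) ^ (n + 1) * f t := by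
          refine intervalIntegral.integral_congr (fun t ht => ?_)
          rw [Set.uIcc_of_le hb.1] at ht
          have htI : t ∈ Set.Icc (0:ℝ) 1 := ⟨ht.1, ht.2.trans hb.2⟩
          rw [← ih t htI]
          push_cast
          ring

variable {f : ℝ → ℝ}

lemma poly_primitive (i : ℕ) (hi : 1 ≤ i) (b : ℝ) :
    ∫ t in (0:ℝ)..b, (i:ℝ) * t ^ (i - 1) = b ^ i := by
  rw [intervalIntegral.integral_const_mul, integral_pow]
  have h1 : i - 1 + 1 = i := Nat.succ_pred_eq_of_pos hi
  rw [h1, zero_pow (by omega : i ≠ 0)]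
  have h2 : ((i - 1 : ℕ) : ℝ) + 1 = (i : ℝ) := by
    rw [Nat.cast_sub hi]; ring
  rw [h2]
  have h3 : (i : ℝ) ≠ 0 := Nat.cast_ne_zero.2 (by omega)
  field_simp
  ring

lemma mixed_primitive (hf : Measurable f) (hf01 : ∀ t, f t ∈ Set.Icc (0:ℝ) 1)
    (i j : ℕ) (hij : 1 ≤ i + j) : ∀ b ∈ Set.Icc (0:ℝ) 1,
    b ^ i * (∫ t in (0:ℝ)..b, f t) ^ j
      = ∫ t in (0:ℝ)..b,
          ((i:ℝ) * t ^ (i - 1) * (∫ s in (0:ℝ)..t, f s) ^ j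
            + (j:ℝ) * t ^ i * (∫ s in (0:ℝ)..t, f s) ^ (j - 1) * f t) := by
  intro b hb
  match j with
  | 0 =>
    have hi : 1 ≤ i := by omega
    rw [pow_zero, mul_one, ← poly_primitive i hi b]
    refine intervalIntegral.integral_congr (fun t _ => ?_)
    simp
  | (j' + 1) =>
    have hcast : ((j' + 1 : ℕ) : ℝ) = (j' : ℝ) + 1 := by push_cast; ring
    match i with
    | 0 =>
      rw [pow_zero, one_mul, pow_primitive hf hf01 j' b hb]
      refine intervalIntegral.integral_congr (fun t _ => ?_)
      simp only [Nat.cast_zero, zero_mul, pow_zero, Nat.add_sub_cancel, hcast]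
      ring
    | (i' + 1) =>
      have hi : 1 ≤ i' + 1 := by omega
      have hu : Measurable (fun t : ℝ => ((i' + 1 : ℕ):ℝ) * t ^ (i' + 1 - 1)) :=
        measurable_const.mul (measurable_id.pow_const _)
      have hv : Measurable (fun t => ((j' + 1 : ℕ):ℝ) * (∫ s in (0:ℝ)..t, f s) ^ (j' + 1 - 1) * f t) :=
        (measurable_const.mul ((F_cont hf hf01).measurable.pow_const _)).mul hf
      have hub : ∀ t ∈ Set.Ioc (0:ℝ) b, |((i' + 1 : ℕ):ℝ) * t ^ (i' + 1 - 1)| ≤ ((i' + 1 : ℕ):ℝ) := by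
        intro t ht
        have htI : t ∈ Set.Icc (0:ℝ) 1 := ⟨ht.1.le, ht.2.trans hb.2⟩
        rw [abs_mul, abs_of_nonneg (by positivity : (0:ℝ) ≤ ((i' + 1 : ℕ):ℝ))]
        have : |t ^ (i' + 1 - 1)| ≤ 1 := by
          rw [abs_pow]
          exact pow_le_one₀ (abs_nonneg _) (abs_le.2 ⟨by linarith [htI.1], htI.2⟩)
        calc ((i' + 1 : ℕ):ℝ) * |t ^ (i' + 1 - 1)| ≤ ((i' + 1 : ℕ):ℝ) * 1 :=
              mul_le_mul_of_nonneg_left this (by positivity)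
          _ = ((i' + 1 : ℕ):ℝ) := mul_one _
      have hvb : ∀ t ∈ Set.Ioc (0:ℝ) b,
          |((j' + 1 : ℕ):ℝ) * (∫ s in (0:ℝ)..t, f s) ^ (j' + 1 - 1) * f t| ≤ ((j' + 1 : ℕ):ℝ) := by
        intro t ht
        have htI : t ∈ Set.Icc (0:ℝ) 1 := ⟨ht.1.le, ht.2.trans hb.2⟩
        have hF := F_mem hf hf01 htI
        have hft := hf01 t
        rw [abs_mul, abs_mul, abs_of_nonneg (by positivity : (0:ℝ) ≤ ((j' + 1 : ℕ):ℝ))]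
        have h2 : |(∫ s in (0:ℝ)..t, f s) ^ (j' + 1 - 1)| ≤ 1 := by
          rw [abs_pow]
          exact pow_le_one₀ (abs_nonneg _) (abs_le.2 ⟨by linarith [hF.1], hF.2⟩)
        have h3 : |f t| ≤ 1 := abs_le.2 ⟨by linarith [hft.1], hft.2⟩
        calc ((j' + 1 : ℕ):ℝ) * |(∫ s in (0:ℝ)..t, f s) ^ (j' + 1 - 1)| * |f t|
            ≤ ((j' + 1 : ℕ):ℝ) * 1 * 1 := by
              refine mul_le_mul (mul_le_mul_of_nonneg_left h2 (by positivity)) h3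
                (abs_nonneg _) (by positivity)
          _ = ((j' + 1 : ℕ):ℝ) := by ring
      have hK := mul_primitive (b := b) hu hv hb.1 hub hvb
      have hU : ∫ t in (0:ℝ)..b, ((i' + 1 : ℕ):ℝ) * t ^ (i' + 1 - 1) = b ^ (i' + 1) :=
        poly_primitive (i' + 1) hi b
      have hV : ∫ t in (0:ℝ)..b, ((j' + 1 : ℕ):ℝ) * (∫ s in (0:ℝ)..t, f s) ^ (j' + 1 - 1) * f t
          = (∫ t in (0:ℝ)..b, f t) ^ (j' + 1) := by
        rw [show (fun t => ((j' + 1 : ℕ):ℝ) * (∫ s in (0:ℝ)..t, f s) ^ (j' + 1 - 1) * f t)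
            = fun t => ((j':ℝ) + 1) * (∫ s in (0:ℝ)..t, f s) ^ j' * f t from
          funext fun t => by rw [hcast]; norm_num]
        exact (pow_primitive hf hf01 j' b hb).symm
      rw [← hU, ← hV, hK]
      refine intervalIntegral.integral_congr (fun t ht => ?_)
      rw [Set.uIcc_of_le hb.1] at ht
      have htI : t ∈ Set.Icc (0:ℝ) 1 := ⟨ht.1, ht.2.trans hb.2⟩
      have hVt : ∫ s in (0:ℝ)..t, ((j' + 1 : ℕ):ℝ) * (∫ x in (0:ℝ)..s, f x) ^ (j' + 1 - 1) * f s
          = (∫ s in (0:ℝ)..t, f s) ^ (j' + 1) := by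
        rw [show (fun s => ((j' + 1 : ℕ):ℝ) * (∫ x in (0:ℝ)..s, f x) ^ (j' + 1 - 1) * f s)
            = fun s => ((j':ℝ) + 1) * (∫ x in (0:ℝ)..s, f x) ^ j' * f s from
          funext fun s => by rw [hcast]; norm_num]
        exact (pow_primitive hf hf01 j' t htI).symm
      have hUt : ∫ s in (0:ℝ)..t, ((i' + 1 : ℕ):ℝ) * s ^ (i' + 1 - 1) = t ^ (i' + 1) :=
        poly_primitive (i' + 1) hi t
      rw [hVt, hUt]
      ring


lemma snoc_mem_simSet_iff {ℓ : ℕ} {b t : ℝ} {y : Fin ℓ → ℝ} :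
    (Fin.snoc y t : Fin (ℓ+1) → ℝ) ∈ simSet (ℓ+1) b
      ↔ t ∈ Set.Icc (0:ℝ) b ∧ y ∈ simSet ℓ b ∧ ∀ i, y i < t := by
  constructor
  · rintro ⟨h1, h2⟩
    refine ⟨?_, ⟨fun i => ?_, fun i j hij => ?_⟩, fun i => ?_⟩
    · have := h1 (Fin.last ℓ); rwa [Fin.snoc_last] at this
    · have := h1 i.castSucc; rwa [Fin.snoc_castSucc] at this
    · have := h2 i.castSucc j.castSucc (by simpa using hij)
      rwa [Fin.snoc_castSucc, Fin.snoc_castSucc] at this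
    · have := h2 i.castSucc (Fin.last ℓ) (Fin.castSucc_lt_last i)
      rwa [Fin.snoc_castSucc, Fin.snoc_last] at this
  · rintro ⟨ht, ⟨hy1, hy2⟩, hlt⟩
    constructor
    · intro i
      refine Fin.lastCases ?_ (fun i => ?_) i
      · rwa [Fin.snoc_last]
      · rw [Fin.snoc_castSucc]; exact hy1 i
    · intro i j hij
      by_cases hj : j = Fin.last ℓ
      · subst hj
        obtain ⟨i', rfl⟩ := Fin.exists_castSucc_eq.2 (ne_of_lt hij)
        rw [Fin.snoc_castSucc, Fin.snoc_last]
        exact hlt i'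
      · obtain ⟨j', rfl⟩ := Fin.exists_castSucc_eq.2 hj
        have hi : i ≠ Fin.last ℓ := by
          intro h
          subst h
          exact absurd (hij.trans (Fin.castSucc_lt_last j')) (lt_irrefl _)
        obtain ⟨i', rfl⟩ := Fin.exists_castSucc_eq.2 hi
        rw [Fin.snoc_castSucc, Fin.snoc_castSucc]
        exact hy2 i' j' (by simpa using hij)

lemma measurable_snoc {ℓ : ℕ} (t : ℝ) :
    Measurable (fun y : Fin ℓ → ℝ => (Fin.snoc y t : Fin (ℓ+1) → ℝ)) := by
  refine measurable_pi_iff.2 (fun i => ?_)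
  refine Fin.lastCases ?_ (fun i => ?_) i
  · simp only [Fin.snoc_last]; exact measurable_const
  · simp only [Fin.snoc_castSucc]; exact measurable_pi_apply i

lemma null_eq_coord {ℓ : ℕ} (i : Fin ℓ) (t : ℝ) :
    volume {y : Fin ℓ → ℝ | y i = t} = 0 := by
  rw [volume_pi]
  exact Measure.pi_hyperplane (μ := fun _ : Fin ℓ => (volume : Measure ℝ)) i t

lemma peel {ℓ : ℕ} {g : Fin (ℓ+1) → ℝ → ℝ} (hg : Nice g) {b : ℝ} (hb0 : 0 ≤ b) (hb1 : b ≤ 1) :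
    simInt g b
      = ∫ t in (0:ℝ)..b, g (Fin.last ℓ) t * simInt (fun i => g i.castSucc) t := by
  have hgc : Nice (fun i : Fin ℓ => g i.castSucc) := ⟨fun i => hg.1 _, fun i t => hg.2 _ t⟩
  set Φ : (Fin (ℓ+1) → ℝ) → ℝ := fun x => ∏ i, g i (x i) with hΦ
  have hΦi : Integrable ((simSet (ℓ+1) b).indicator Φ) := by
    rw [integrable_indicator_iff (measurableSet_simSet _ _)]
    exact integrableOn_simProd hg hb1
  set e := MeasurableEquiv.piFinSuccAbove (fun _ : Fin (ℓ+1) => ℝ) (Fin.last ℓ) with he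
  have hmp : MeasurePreserving e.symm :=
    (volume_preserving_piFinSuccAbove (fun _ : Fin (ℓ+1) => ℝ) (Fin.last ℓ)).symm
  have hemb := e.symm.measurableEmbedding
  have hsnoc : ∀ (t : ℝ) (y : Fin ℓ → ℝ), e.symm (t, y) = (Fin.snoc y t : Fin (ℓ+1) → ℝ) := by
    intro t y
    rw [he, MeasurableEquiv.piFinSuccAbove_symm_apply]
    exact Fin.insertNth_last' t y
  have h1 : simInt g b
      = ∫ z : ℝ × (Fin ℓ → ℝ), (simSet (ℓ+1) b).indicator Φ (e.symm z) := by
    rw [simInt, ← integral_indicator (measurableSet_simSet _ _)]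
    exact (hmp.integral_comp hemb _).symm
  have hInt2 : Integrable (fun z : ℝ × (Fin ℓ → ℝ) => (simSet (ℓ+1) b).indicator Φ (e.symm z))
      (volume.prod volume) := (hmp.integrable_comp_emb hemb).2 hΦi
  have hinner : ∀ t : ℝ, (∫ y : Fin ℓ → ℝ, (simSet (ℓ+1) b).indicator Φ (Fin.snoc y t))
      = (Set.Icc (0:ℝ) b).indicator
          (fun t => g (Fin.last ℓ) t * simInt (fun i => g i.castSucc) t) t := by
    intro t
    by_cases ht : t ∈ Set.Icc (0:ℝ) b
    · rw [Set.indicator_of_mem ht]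
      set pre := (fun y : Fin ℓ → ℝ => (Fin.snoc y t : Fin (ℓ+1) → ℝ)) ⁻¹' simSet (ℓ+1) b
        with hpre
      have hAm : MeasurableSet pre := (measurable_snoc t) (measurableSet_simSet _ _)
      have hsub : pre ⊆ simSet ℓ t := by
        intro y hy
        obtain ⟨ht', ⟨hy1, hy2⟩, hlt⟩ := snoc_mem_simSet_iff.1 hy
        exact ⟨fun i => ⟨(hy1 i).1, (hlt i).le⟩, hy2⟩
      have hsup : simSet ℓ t \ pre ⊆ ⋃ i, {y : Fin ℓ → ℝ | y i = t} := by
        rintro y ⟨⟨hy1, hy2⟩, hyn⟩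
        by_contra hc
        simp only [Set.mem_iUnion, Set.mem_setOf_eq, not_exists] at hc
        apply hyn
        refine snoc_mem_simSet_iff.2
          ⟨ht, ⟨fun i => ⟨(hy1 i).1, (hy1 i).2.trans ht.2⟩, hy2⟩, fun i => ?_⟩
        rcases lt_or_eq_of_le (hy1 i).2 with h | h
        · exact h
        · exact absurd h (hc i)
      have hAe : pre =ᵐ[volume] simSet ℓ t := by
        rw [MeasureTheory.ae_eq_set]
        constructor
        · rw [Set.diff_eq_empty.2 hsub]; exact measure_empty
        · exact measure_mono_null hsup (measure_iUnion_null fun i => null_eq_coord i t)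
      calc ∫ y : Fin ℓ → ℝ, (simSet (ℓ+1) b).indicator Φ (Fin.snoc y t)
          = ∫ y : Fin ℓ → ℝ, pre.indicator (fun y => Φ (Fin.snoc y t)) y := by
            refine integral_congr_ae (Filter.Eventually.of_forall fun y => ?_)
            show (simSet (ℓ+1) b).indicator Φ (Fin.snoc y t)
              = pre.indicator (fun y => Φ (Fin.snoc y t)) y
            by_cases hy : y ∈ pre
            · have hy' : (Fin.snoc y t : Fin (ℓ+1) → ℝ) ∈ simSet (ℓ+1) b := hy
              rw [Set.indicator_of_mem hy', Set.indicator_of_mem hy]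
            · have hy' : (Fin.snoc y t : Fin (ℓ+1) → ℝ) ∉ simSet (ℓ+1) b := hy
              rw [Set.indicator_of_notMem hy', Set.indicator_of_notMem hy]
        _ = ∫ y in pre, Φ (Fin.snoc y t) := integral_indicator hAm
        _ = ∫ y in simSet ℓ t, Φ (Fin.snoc y t) := setIntegral_congr_set hAe
        _ = ∫ y in simSet ℓ t,
              (∏ i : Fin ℓ, g i.castSucc (y i)) * g (Fin.last ℓ) t := by
            refine setIntegral_congr_fun (measurableSet_simSet _ _) (fun y _ => ?_)
            rw [hΦ]
            simp only
            rw [Fin.prod_univ_castSucc]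
            congr 1
            · exact Finset.prod_congr rfl (fun i _ => by rw [Fin.snoc_castSucc])
            · rw [Fin.snoc_last]
        _ = g (Fin.last ℓ) t * simInt (fun i => g i.castSucc) t := by
            rw [integral_mul_const, simInt, mul_comm]
    · rw [Set.indicator_of_notMem ht]
      have hz : ∀ y : Fin ℓ → ℝ, (simSet (ℓ+1) b).indicator Φ (Fin.snoc y t) = 0 := by
        intro y
        exact Set.indicator_of_notMem (fun hc => ht (snoc_mem_simSet_iff.1 hc).1) Φ
      simp only [hz, integral_zero]
  calc simInt g b
      = ∫ z : ℝ × (Fin ℓ → ℝ), (simSet (ℓ+1) b).indicator Φ (e.symm z) := h1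
    _ = ∫ t : ℝ, ∫ y : Fin ℓ → ℝ, (simSet (ℓ+1) b).indicator Φ (e.symm (t, y)) :=
        integral_prod _ hInt2
    _ = ∫ t : ℝ, (Set.Icc (0:ℝ) b).indicator
          (fun t => g (Fin.last ℓ) t * simInt (fun i => g i.castSucc) t) t := by
        refine integral_congr_ae (Filter.Eventually.of_forall fun t => ?_)
        simp only [hsnoc]
        exact hinner t
    _ = ∫ t in Set.Icc (0:ℝ) b, g (Fin.last ℓ) t * simInt (fun i => g i.castSucc) t :=
        integral_indicator measurableSet_Icc
    _ = ∫ t in Set.Ioc (0:ℝ) b, g (Fin.last ℓ) t * simInt (fun i => g i.castSucc) t :=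
        integral_Icc_eq_integral_Ioc
    _ = ∫ t in (0:ℝ)..b, g (Fin.last ℓ) t * simInt (fun i => g i.castSucc) t :=
        (intervalIntegral.integral_of_le hb0).symm

noncomputable def pat (f : ℝ → ℝ) {m : ℕ} (S : Finset (Fin m)) : Fin m → ℝ → ℝ :=
  fun i => if i ∈ S then f else fun _ => 1

lemma pat_nice (hf : Measurable f) (hf01 : ∀ t, f t ∈ Set.Icc (0:ℝ) 1) {m : ℕ}
    (S : Finset (Fin m)) : Nice (pat f S) := by
  constructor
  · intro i
    simp only [pat]
    split_ifs
    · exact hf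
    · exact measurable_const
  · intro i t
    simp only [pat]
    split_ifs
    · exact hf01 t
    · exact ⟨zero_le_one, le_rfl⟩

lemma mem_map_castSucc {m : ℕ} (S' : Finset (Fin m)) (i : Fin m) :
    i.castSucc ∈ S'.map Fin.castSuccEmb ↔ i ∈ S' := by
  rw [show i.castSucc = Fin.castSuccEmb i from rfl]
  exact Finset.mem_map' _

lemma last_not_mem_map {m : ℕ} (S' : Finset (Fin m)) :
    Fin.last m ∉ S'.map Fin.castSuccEmb := by
  intro h
  obtain ⟨x, _, hx⟩ := Finset.mem_map.1 h
  exact (Fin.castSucc_lt_last x).ne hx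

lemma pat_map_castSucc {f : ℝ → ℝ} {m : ℕ} (S' : Finset (Fin m)) :
    (fun i : Fin m => pat f (S'.map Fin.castSuccEmb) i.castSucc) = pat f S' := by
  funext i
  simp only [pat, mem_map_castSucc]

lemma pat_map_last {f : ℝ → ℝ} {m : ℕ} (S' : Finset (Fin m)) :
    pat f (S'.map Fin.castSuccEmb) (Fin.last m) = fun _ => 1 := by
  simp only [pat, if_neg (last_not_mem_map S')]

lemma pat_insert_castSucc {f : ℝ → ℝ} {m : ℕ} (S' : Finset (Fin m)) :
    (fun i : Fin m => pat f (insert (Fin.last m) (S'.map Fin.castSuccEmb)) i.castSucc)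
      = pat f S' := by
  funext i
  simp only [pat, Finset.mem_insert, mem_map_castSucc, (Fin.castSucc_lt_last i).ne, false_or]

lemma pat_insert_last {f : ℝ → ℝ} {m : ℕ} (S' : Finset (Fin m)) :
    pat f (insert (Fin.last m) (S'.map Fin.castSuccEmb)) (Fin.last m) = f := by
  simp only [pat, if_pos (Finset.mem_insert_self _ _)]

lemma simSet_zero (b : ℝ) : simSet 0 b = Set.univ := by
  ext x
  simp only [simSet, Set.mem_setOf_eq, Set.mem_univ, iff_true]
  exact ⟨fun i => i.elim0, fun i => i.elim0⟩

lemma simInt_nil (g : Fin 0 → ℝ → ℝ) (b : ℝ) : simInt g b = 1 := by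
  rw [simInt, simSet_zero, Measure.restrict_univ,
    show (fun x : Fin 0 → ℝ => ∏ i, g i (x i)) = fun _ => (1:ℝ) from funext fun x => by simp,
    integral_const, volume_pi, measureReal_def, Measure.pi_univ]
  simp

lemma intervalIntegrable_sum {γ : Type*} {s : Finset γ} {F : γ → ℝ → ℝ} {b : ℝ}
    (h : ∀ S ∈ s, IntervalIntegrable (F S) volume 0 b) :
    IntervalIntegrable (fun t => ∑ S ∈ s, F S t) volume 0 b :=
  ⟨integrable_finset_sum s (fun S hS => (h S hS).1),
   integrable_finset_sum s (fun S hS => (h S hS).2)⟩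

lemma sum_pat_eq {f : ℝ → ℝ} (hf : Measurable f) (hf01 : ∀ t, f t ∈ Set.Icc (0:ℝ) 1) :
    ∀ m : ℕ, ∀ j ≤ m, ∀ b ∈ Set.Icc (0:ℝ) 1,
      (((m - j).factorial : ℝ) * (j.factorial : ℝ))
          * ∑ S ∈ Finset.powersetCard j (Finset.univ : Finset (Fin m)), simInt (pat f S) b
        = b ^ (m - j) * (∫ t in (0:ℝ)..b, f t) ^ j := by
  intro m
  induction m with
  | zero =>
    intro j hj b hb
    have hj0 : j = 0 := Nat.le_zero.1 hj
    subst hj0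
    rw [Finset.powersetCard_zero, Finset.sum_singleton, simInt_nil]
    simp
  | succ m ih =>
    intro j hj b hb
    have huniv : (Finset.univ : Finset (Fin (m+1)))
        = insert (Fin.last m) (Finset.univ.map Fin.castSuccEmb) := by
      rw [Fin.univ_castSuccEmb, Finset.cons_eq_insert]
    have hpeel1 : ∀ S' : Finset (Fin m), simInt (pat f (S'.map Fin.castSuccEmb)) b
        = ∫ t in (0:ℝ)..b, simInt (pat f S') t := by
      intro S'
      rw [peel (pat_nice hf hf01 _) hb.1 hb.2, pat_map_castSucc, pat_map_last]
      exact intervalIntegral.integral_congr fun t _ => one_mul _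
    have hpeel2 : ∀ S' : Finset (Fin m),
        simInt (pat f (insert (Fin.last m) (S'.map Fin.castSuccEmb))) b
        = ∫ t in (0:ℝ)..b, f t * simInt (pat f S') t := by
      intro S'
      rw [peel (pat_nice hf hf01 _) hb.1 hb.2, pat_insert_castSucc, pat_insert_last]
    match j, hj with
    | 0, _ =>
      rw [Finset.powersetCard_zero, Finset.sum_singleton,
        show (∅ : Finset (Fin (m+1))) = (∅ : Finset (Fin m)).map Fin.castSuccEmb from
          (Finset.map_empty _).symm,
        hpeel1]
      have key : ∫ t in (0:ℝ)..b,
          ((m.factorial : ℝ) * ((0:ℕ).factorial : ℝ)) * simInt (pat f (∅ : Finset (Fin m))) t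
          = ∫ t in (0:ℝ)..b, t ^ m := by
        refine intervalIntegral.integral_congr fun t ht => ?_
        rw [Set.uIcc_of_le hb.1] at ht
        have h := ih 0 (Nat.zero_le m) t ⟨ht.1, ht.2.trans hb.2⟩
        rw [Finset.powersetCard_zero, Finset.sum_singleton] at h
        simpa using h
      have hc : (((m + 1 - 0).factorial : ℝ) * ((0:ℕ).factorial : ℝ))
          = ((m+1:ℕ):ℝ) * ((m.factorial : ℝ) * ((0:ℕ).factorial : ℝ)) := by
        simp [Nat.factorial_succ]
      rw [hc, mul_assoc, ← intervalIntegral.integral_const_mul, key, integral_pow]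
      have : ((m:ℝ) + 1) ≠ 0 := by positivity
      field_simp
      simp
    | (j'+1), hj =>
      have hmj : m + 1 - (j'+1) = m - j' := Nat.succ_sub_succ m j'
      have hdisj : Disjoint (Finset.powersetCard (j'+1) (Finset.univ.map Fin.castSuccEmb))
          ((Finset.powersetCard j' ((Finset.univ : Finset (Fin m)).map Fin.castSuccEmb)).image
            (insert (Fin.last m))) := by
        rw [Finset.disjoint_left]
        intro S hS1 hS2
        obtain ⟨T, _, rfl⟩ := Finset.mem_image.1 hS2
        exact last_not_mem_map _
          ((Finset.mem_powersetCard.1 hS1).1 (Finset.mem_insert_self _ _))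
      have hinj : ∀ x ∈ Finset.powersetCard j' ((Finset.univ : Finset (Fin m)).map Fin.castSuccEmb),
          ∀ y ∈ Finset.powersetCard j' ((Finset.univ : Finset (Fin m)).map Fin.castSuccEmb),
          insert (Fin.last m) x = insert (Fin.last m) y → x = y := by
        intro x hx y hy hxy
        have hxl : Fin.last m ∉ x := fun hc =>
          last_not_mem_map _ ((Finset.mem_powersetCard.1 hx).1 hc)
        have hyl : Fin.last m ∉ y := fun hc =>
          last_not_mem_map _ ((Finset.mem_powersetCard.1 hy).1 hc)
        rw [← Finset.erase_insert hxl, ← Finset.erase_insert hyl, hxy]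
      rw [huniv, Finset.powersetCard_succ_insert (last_not_mem_map _), Finset.sum_union hdisj]
      have hsum1 : ∑ S ∈ Finset.powersetCard (j'+1)
            ((Finset.univ : Finset (Fin m)).map Fin.castSuccEmb), simInt (pat f S) b
          = ∑ S' ∈ Finset.powersetCard (j'+1) (Finset.univ : Finset (Fin m)),
              ∫ t in (0:ℝ)..b, simInt (pat f S') t := by
        rw [Finset.powersetCard_map, Finset.sum_map]
        exact Finset.sum_congr rfl fun S' _ => by
          rw [show (Finset.mapEmbedding Fin.castSuccEmb).toEmbedding S'
              = S'.map Fin.castSuccEmb from rfl, hpeel1]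
      have hsum2 : ∑ S ∈ (Finset.powersetCard j'
            ((Finset.univ : Finset (Fin m)).map Fin.castSuccEmb)).image (insert (Fin.last m)),
            simInt (pat f S) b
          = ∑ S' ∈ Finset.powersetCard j' (Finset.univ : Finset (Fin m)),
              ∫ t in (0:ℝ)..b, f t * simInt (pat f S') t := by
        rw [Finset.sum_image hinj, Finset.powersetCard_map, Finset.sum_map]
        exact Finset.sum_congr rfl fun S' _ => by
          rw [show (Finset.mapEmbedding Fin.castSuccEmb).toEmbedding S'
              = S'.map Fin.castSuccEmb from rfl, hpeel2]
      rw [hsum1, hsum2]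
      have hii1 : ∀ S' ∈ Finset.powersetCard (j'+1) (Finset.univ : Finset (Fin m)),
          IntervalIntegrable (fun t => simInt (pat f S') t) volume 0 b := by
        intro S' _
        have := intervalIntegrable_mul_simInt (pat_nice hf hf01 S')
          (measurable_const : Measurable (fun _ : ℝ => (1:ℝ)))
          (fun t => ⟨zero_le_one, le_rfl⟩) hb.1 hb.2
        simpa using this
      have hii2 : ∀ S' ∈ Finset.powersetCard j' (Finset.univ : Finset (Fin m)),
          IntervalIntegrable (fun t => f t * simInt (pat f S') t) volume 0 b :=
        fun S' _ => intervalIntegrable_mul_simInt (pat_nice hf hf01 S') hf hf01 hb.1 hb.2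
      rw [← intervalIntegral.integral_finset_sum hii1,
        ← intervalIntegral.integral_finset_sum hii2,
        ← intervalIntegral.integral_add (intervalIntegrable_sum hii1)
          (intervalIntegrable_sum hii2),
        ← intervalIntegral.integral_const_mul, hmj,
        mixed_primitive hf hf01 (m - j') (j'+1) (by omega) b hb]
      refine intervalIntegral.integral_congr fun t ht => ?_
      rw [Set.uIcc_of_le hb.1] at ht
      have htI : t ∈ Set.Icc (0:ℝ) 1 := ⟨ht.1, ht.2.trans hb.2⟩
      have hB := ih j' (by omega) t htI
      have hfac : ((j'+1).factorial : ℝ) = ((j':ℝ) + 1) * (j'.factorial : ℝ) := by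
        rw [Nat.factorial_succ]
        push_cast
        ring
      have hA : (((m - j').factorial : ℝ) * ((j'+1).factorial : ℝ))
            * ∑ S' ∈ Finset.powersetCard (j'+1) (Finset.univ : Finset (Fin m)),
                simInt (pat f S') t
          = ((m - j' : ℕ):ℝ) * t ^ (m - j' - 1) * (∫ s in (0:ℝ)..t, f s) ^ (j'+1) := by
        by_cases hj'm : j' + 1 ≤ m
        · have hIH := ih (j'+1) hj'm t htI
          have h1 : m - j' = (m - (j'+1)) + 1 := by omega
          have hfac2 : ((m - j').factorial : ℝ)
              = ((m - j' : ℕ):ℝ) * ((m - (j'+1)).factorial : ℝ) := by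
            rw [h1, Nat.factorial_succ, ← h1]
            push_cast
            ring
          have hexp : m - j' - 1 = m - (j'+1) := by omega
          calc (((m - j').factorial : ℝ) * ((j'+1).factorial : ℝ))
              * ∑ S' ∈ Finset.powersetCard (j'+1) (Finset.univ : Finset (Fin m)),
                  simInt (pat f S') t
              = ((m - j' : ℕ):ℝ) * ((((m - (j'+1)).factorial : ℝ) * ((j'+1).factorial : ℝ))
                  * ∑ S' ∈ Finset.powersetCard (j'+1) (Finset.univ : Finset (Fin m)),
                      simInt (pat f S') t) := by rw [hfac2]; ring
            _ = ((m - j' : ℕ):ℝ) * (t ^ (m - (j'+1)) * (∫ s in (0:ℝ)..t, f s) ^ (j'+1)) := by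
                  rw [hIH]
            _ = ((m - j' : ℕ):ℝ) * t ^ (m - j' - 1) * (∫ s in (0:ℝ)..t, f s) ^ (j'+1) := by
                  rw [hexp]; ring
        · have hempty : Finset.powersetCard (j'+1) (Finset.univ : Finset (Fin m)) = ∅ :=
            Finset.powersetCard_eq_empty.2 (by rw [Finset.card_univ, Fintype.card_fin]; omega)
          have hmj0 : m - j' = 0 := by omega
          rw [hempty, Finset.sum_empty, hmj0]
          simp
      have hmul : ∑ S' ∈ Finset.powersetCard j' (Finset.univ : Finset (Fin m)),
            f t * simInt (pat f S') t
          = f t * ∑ S' ∈ Finset.powersetCard j' (Finset.univ : Finset (Fin m)),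
              simInt (pat f S') t := (Finset.mul_sum _ _ _).symm
      rw [mul_add, hmul, Nat.add_sub_cancel, hA]
      push_cast
      linear_combination f t * ((j':ℝ) + 1) * hB
        + f t * (∑ S' ∈ Finset.powersetCard j' (Finset.univ : Finset (Fin m)),
            simInt (pat f S') t) * (((m - j').factorial : ℝ)) * hfac

lemma comb_identity {m : ℕ} (a : Fin (m+1) → ℝ) (j : ℕ) :
    ∑ u : Fin (m+1) → Bool,
        (((Finset.univ.filter (fun k : Fin m => u k.castSucc = true)).card.choose j : ℕ) : ℝ)
          * ∏ i, (if u i then a i else 1 - a i)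
      = ∑ S ∈ Finset.powersetCard j (Finset.univ : Finset (Fin m)),
          ∏ i, (if i ∈ S.map Fin.castSuccEmb then a i else 1) := by
  classical
  have step1 : ∀ u : Fin (m+1) → Bool,
      (((Finset.univ.filter (fun k : Fin m => u k.castSucc = true)).card.choose j : ℕ) : ℝ)
          * ∏ i, (if u i then a i else 1 - a i)
        = ∑ _S ∈ Finset.powersetCard j
            (Finset.univ.filter (fun k : Fin m => u k.castSucc = true)),
            ∏ i, (if u i then a i else 1 - a i) := by
    intro u
    rw [Finset.sum_const, Finset.card_powersetCard, nsmul_eq_mul]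
  have step2 :
      ∑ u : Fin (m+1) → Bool,
        ∑ _S ∈ Finset.powersetCard j
            (Finset.univ.filter (fun k : Fin m => u k.castSucc = true)),
          ∏ i, (if u i then a i else 1 - a i)
      = ∑ S ∈ Finset.powersetCard j (Finset.univ : Finset (Fin m)),
          ∑ u ∈ Finset.univ.filter (fun u : Fin (m+1) → Bool =>
              S ⊆ Finset.univ.filter (fun k : Fin m => u k.castSucc = true)),
            ∏ i, (if u i then a i else 1 - a i) := by
    refine Finset.sum_comm' (fun u S => ?_)
    simp only [Finset.mem_univ, true_and, Finset.mem_powersetCard, Finset.mem_filter,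
      and_true, Finset.subset_univ]
  have step3 : ∀ S ∈ Finset.powersetCard j (Finset.univ : Finset (Fin m)),
      ∑ u ∈ Finset.univ.filter (fun u : Fin (m+1) → Bool =>
          S ⊆ Finset.univ.filter (fun k : Fin m => u k.castSucc = true)),
        ∏ i, (if u i then a i else 1 - a i)
      = ∏ i, (if i ∈ S.map Fin.castSuccEmb then a i else 1) := by
    intro S _
    have hfilter : Finset.univ.filter (fun u : Fin (m+1) → Bool =>
        S ⊆ Finset.univ.filter (fun k : Fin m => u k.castSucc = true))
        = Fintype.piFinset (fun i : Fin (m+1) =>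
            if i ∈ S.map Fin.castSuccEmb then {true} else (Finset.univ : Finset Bool)) := by
      ext u
      simp only [Finset.mem_filter, Finset.mem_univ, true_and, Fintype.mem_piFinset]
      constructor
      · intro h i
        by_cases hi : i ∈ S.map Fin.castSuccEmb
        · rw [if_pos hi]
          obtain ⟨k, hk, rfl⟩ := Finset.mem_map.1 hi
          have h2 := h hk
          simp only [Finset.mem_filter] at h2
          simpa using h2.2
        · rw [if_neg hi]; exact Finset.mem_univ _
      · intro h k hk
        simp only [Finset.mem_filter, Finset.mem_univ, true_and]
        have hi : k.castSucc ∈ S.map Fin.castSuccEmb :=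
          Finset.mem_map_of_mem _ hk
        have h2 := h k.castSucc
        rw [if_pos hi] at h2
        simpa using h2
    rw [hfilter]
    trans (∏ i : Fin (m+1), ∑ b ∈ (if i ∈ S.map Fin.castSuccEmb
        then ({true} : Finset Bool) else (Finset.univ : Finset Bool)),
        (if b = true then a i else 1 - a i))
    · exact (Finset.prod_univ_sum
        (fun i : Fin (m+1) => if i ∈ S.map Fin.castSuccEmb then ({true} : Finset Bool)
          else (Finset.univ : Finset Bool))
        (fun (i : Fin (m+1)) (b : Bool) => if b = true then a i else 1 - a i)).symm
    · refine Finset.prod_congr rfl fun i _ => ?_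
      by_cases hi : i ∈ S.map Fin.castSuccEmb
      · rw [if_pos hi, if_pos hi, Finset.sum_singleton]
        simp
      · rw [if_neg hi, if_neg hi, Fintype.sum_bool]
        norm_num
  calc ∑ u : Fin (m+1) → Bool,
        (((Finset.univ.filter (fun k : Fin m => u k.castSucc = true)).card.choose j : ℕ) : ℝ)
          * ∏ i, (if u i then a i else 1 - a i)
      = ∑ u : Fin (m+1) → Bool,
          ∑ _S ∈ Finset.powersetCard j
              (Finset.univ.filter (fun k : Fin m => u k.castSucc = true)),
            ∏ i, (if u i then a i else 1 - a i) :=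
        Finset.sum_congr rfl fun u _ => step1 u
    _ = ∑ S ∈ Finset.powersetCard j (Finset.univ : Finset (Fin m)),
          ∑ u ∈ Finset.univ.filter (fun u : Fin (m+1) → Bool =>
              S ⊆ Finset.univ.filter (fun k : Fin m => u k.castSucc = true)),
            ∏ i, (if u i then a i else 1 - a i) := step2
    _ = ∑ S ∈ Finset.powersetCard j (Finset.univ : Finset (Fin m)),
          ∏ i, (if i ∈ S.map Fin.castSuccEmb then a i else 1) :=
        Finset.sum_congr rfl step3

lemma wordDensity_eq {f : ℝ → ℝ} {ℓ : ℕ} (u : Fin ℓ → Bool) :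
    wordDensity u f = (ℓ.factorial : ℝ)
      * simInt (fun k => if u k then f else fun t => 1 - f t) 1 := by
  have hset : {x : Fin ℓ → ℝ | (∀ i, x i ∈ Set.Icc (0:ℝ) 1)
      ∧ (∀ i j : Fin ℓ, i < j → x i < x j)} = simSet ℓ 1 := rfl
  rw [wordDensity, hset, simInt]
  congr 1
  refine integral_congr_ae (Filter.Eventually.of_forall fun x => ?_)
  refine Finset.prod_congr rfl fun k _ => ?_
  by_cases hk : u k = true <;> simp [hk]

lemma main_global (f : ℝ → ℝ) (hf : Measurable f) (hf01 : ∀ t, f t ∈ Set.Icc (0:ℝ) 1)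
    (i j : ℕ) :
    ∫ x in (0:ℝ)..1, x ^ i * (∫ t in (0:ℝ)..x, f t) ^ j
      = ((Nat.factorial i : ℝ) * (Nat.factorial j : ℝ) / (Nat.factorial (i + j + 1) : ℝ))
          * ∑ u : Fin (i + j + 1) → Bool,
            (if j ≤ (Finset.univ.filter (fun m : Fin (i + j) => u m.castSucc = true)).card then
              (Nat.choose
                  ((Finset.univ.filter (fun m : Fin (i + j) => u m.castSucc = true)).card) j : ℝ)
                * wordDensity u f
            else 0) := by
  classical
  have h01 : (0:ℝ) ≤ 1 := zero_le_one
  have hIcc1 : (1:ℝ) ∈ Set.Icc (0:ℝ) 1 := ⟨zero_le_one, le_rfl⟩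
  have hgwNice : ∀ u : Fin (i+j+1) → Bool,
      Nice (fun k => if u k then f else fun t => 1 - f t) := by
    intro u
    constructor
    · intro k
      show Measurable (if u k then f else fun t => 1 - f t)
      by_cases hk : u k = true
      · rw [if_pos hk]; exact hf
      · rw [if_neg hk]; exact measurable_const.sub hf
    · intro k t
      show (if u k then f else fun t => 1 - f t) t ∈ Set.Icc (0:ℝ) 1
      by_cases hk : u k = true
      · rw [if_pos hk]; exact hf01 t
      · rw [if_neg hk]
        exact ⟨by linarith [(hf01 t).2], by linarith [(hf01 t).1]⟩
  have hterm : ∀ u : Fin (i+j+1) → Bool,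
      (if j ≤ (Finset.univ.filter (fun m : Fin (i + j) => u m.castSucc = true)).card then
        (Nat.choose
            ((Finset.univ.filter (fun m : Fin (i + j) => u m.castSucc = true)).card) j : ℝ)
          * wordDensity u f
      else 0)
      = ((i+j+1).factorial : ℝ)
          * (((Finset.univ.filter (fun m : Fin (i + j) => u m.castSucc = true)).card.choose j
              : ℕ) : ℝ)
          * simInt (fun k => if u k then f else fun t => 1 - f t) 1 := by
    intro u
    split_ifs with h
    · rw [wordDensity_eq]; ring
    · rw [Nat.choose_eq_zero_of_lt (lt_of_not_ge h)]
      simp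
  have hkey : ∑ u : Fin (i+j+1) → Bool,
        (((Finset.univ.filter (fun m : Fin (i + j) => u m.castSucc = true)).card.choose j
            : ℕ) : ℝ)
          * simInt (fun k => if u k then f else fun t => 1 - f t) 1
      = ∑ S ∈ Finset.powersetCard j (Finset.univ : Finset (Fin (i+j))),
          simInt (pat f (S.map Fin.castSuccEmb)) 1 := by
    have hInt1 : ∀ u ∈ (Finset.univ : Finset (Fin (i+j+1) → Bool)),
        Integrable (fun x : Fin (i+j+1) → ℝ =>
          (((Finset.univ.filter (fun m : Fin (i + j) => u m.castSucc = true)).card.choose j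
              : ℕ) : ℝ)
            * ∏ k, (fun k => if u k then f else fun t => 1 - f t) k (x k))
          (volume.restrict (simSet (i+j+1) 1)) :=
      fun u _ => (integrableOn_simProd (hgwNice u) le_rfl).const_mul _
    have hInt2 : ∀ S ∈ Finset.powersetCard j (Finset.univ : Finset (Fin (i+j))),
        Integrable (fun x : Fin (i+j+1) → ℝ => ∏ k, pat f (S.map Fin.castSuccEmb) k (x k))
          (volume.restrict (simSet (i+j+1) 1)) :=
      fun S _ => integrableOn_simProd (pat_nice hf hf01 _) le_rfl
    calc ∑ u : Fin (i+j+1) → Bool,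
          (((Finset.univ.filter (fun m : Fin (i + j) => u m.castSucc = true)).card.choose j
              : ℕ) : ℝ)
            * simInt (fun k => if u k then f else fun t => 1 - f t) 1
        = ∑ u : Fin (i+j+1) → Bool, ∫ x in simSet (i+j+1) 1,
            (((Finset.univ.filter (fun m : Fin (i + j) => u m.castSucc = true)).card.choose j
                : ℕ) : ℝ)
              * ∏ k, (fun k => if u k then f else fun t => 1 - f t) k (x k) :=
          Finset.sum_congr rfl fun u _ => by
            rw [simInt]
            exact (integral_const_mul _ _).symm
      _ = ∫ x in simSet (i+j+1) 1, ∑ u : Fin (i+j+1) → Bool,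
            (((Finset.univ.filter (fun m : Fin (i + j) => u m.castSucc = true)).card.choose j
                : ℕ) : ℝ)
              * ∏ k, (fun k => if u k then f else fun t => 1 - f t) k (x k) :=
          (integral_finset_sum _ hInt1).symm
      _ = ∫ x in simSet (i+j+1) 1, ∑ S ∈ Finset.powersetCard j
            (Finset.univ : Finset (Fin (i+j))),
            ∏ k, pat f (S.map Fin.castSuccEmb) k (x k) := by
          refine integral_congr_ae (Filter.Eventually.of_forall fun x => ?_)
          have hci := comb_identity (fun idx : Fin ((i+j)+1) => f (x idx)) j
          calc ∑ u : Fin (i+j+1) → Bool,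
                (((Finset.univ.filter
                    (fun m : Fin (i + j) => u m.castSucc = true)).card.choose j : ℕ) : ℝ)
                  * ∏ k, (fun k => if u k then f else fun t => 1 - f t) k (x k)
              = ∑ u : Fin (i+j+1) → Bool,
                  (((Finset.univ.filter
                      (fun m : Fin (i + j) => u m.castSucc = true)).card.choose j : ℕ) : ℝ)
                    * ∏ k, (if u k then f (x k) else 1 - f (x k)) :=
                Finset.sum_congr rfl fun u _ => by
                  congr 1
                  exact Finset.prod_congr rfl fun k _ => by
                    by_cases hk : u k = true <;> simp [hk]
            _ = ∑ S ∈ Finset.powersetCard j (Finset.univ : Finset (Fin (i+j))),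
                  ∏ k, (if k ∈ S.map Fin.castSuccEmb then f (x k) else 1) := hci
            _ = ∑ S ∈ Finset.powersetCard j (Finset.univ : Finset (Fin (i+j))),
                  ∏ k, pat f (S.map Fin.castSuccEmb) k (x k) :=
                Finset.sum_congr rfl fun S _ =>
                  Finset.prod_congr rfl fun k _ => by
                    by_cases hk : k ∈ S.map Fin.castSuccEmb <;> simp [pat, hk]
      _ = ∑ S ∈ Finset.powersetCard j (Finset.univ : Finset (Fin (i+j))),
            ∫ x in simSet (i+j+1) 1, ∏ k, pat f (S.map Fin.castSuccEmb) k (x k) :=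
          integral_finset_sum _ hInt2
      _ = ∑ S ∈ Finset.powersetCard j (Finset.univ : Finset (Fin (i+j))),
            simInt (pat f (S.map Fin.castSuccEmb)) 1 := rfl
  have hpeel : ∀ S' : Finset (Fin (i+j)), simInt (pat f (S'.map Fin.castSuccEmb)) 1
      = ∫ t in (0:ℝ)..1, simInt (pat f S') t := by
    intro S'
    rw [peel (pat_nice hf hf01 _) h01 le_rfl, pat_map_castSucc, pat_map_last]
    exact intervalIntegral.integral_congr fun t _ => one_mul _
  have hii : ∀ S ∈ Finset.powersetCard j (Finset.univ : Finset (Fin (i+j))),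
      IntervalIntegrable (fun x => simInt (pat f S) x) volume 0 1 := by
    intro S _
    have := intervalIntegrable_mul_simInt (pat_nice hf hf01 S)
      (measurable_const : Measurable (fun _ : ℝ => (1:ℝ)))
      (fun t => ⟨zero_le_one, le_rfl⟩) h01 le_rfl
    simpa using this
  have hLHS : ∫ x in (0:ℝ)..1, x ^ i * (∫ t in (0:ℝ)..x, f t) ^ j
      = ((Nat.factorial i : ℝ) * (Nat.factorial j : ℝ))
          * ∑ S ∈ Finset.powersetCard j (Finset.univ : Finset (Fin (i+j))),
              simInt (pat f (S.map Fin.castSuccEmb)) 1 := by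
    calc ∫ x in (0:ℝ)..1, x ^ i * (∫ t in (0:ℝ)..x, f t) ^ j
        = ∫ x in (0:ℝ)..1, ((Nat.factorial i : ℝ) * (Nat.factorial j : ℝ))
            * ∑ S ∈ Finset.powersetCard j (Finset.univ : Finset (Fin (i+j))),
                simInt (pat f S) x := by
          refine intervalIntegral.integral_congr fun x hx => ?_
          rw [Set.uIcc_of_le h01] at hx
          have h := sum_pat_eq hf hf01 (i+j) j (by omega) x hx
          rw [Nat.add_sub_cancel] at h
          exact h.symm
      _ = ((Nat.factorial i : ℝ) * (Nat.factorial j : ℝ))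
            * ∫ x in (0:ℝ)..1, ∑ S ∈ Finset.powersetCard j
                (Finset.univ : Finset (Fin (i+j))), simInt (pat f S) x :=
          intervalIntegral.integral_const_mul _ _
      _ = ((Nat.factorial i : ℝ) * (Nat.factorial j : ℝ))
            * ∑ S ∈ Finset.powersetCard j (Finset.univ : Finset (Fin (i+j))),
                ∫ x in (0:ℝ)..1, simInt (pat f S) x := by
          rw [intervalIntegral.integral_finset_sum hii]
      _ = ((Nat.factorial i : ℝ) * (Nat.factorial j : ℝ))
            * ∑ S ∈ Finset.powersetCard j (Finset.univ : Finset (Fin (i+j))),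
                simInt (pat f (S.map Fin.castSuccEmb)) 1 := by
          rw [Finset.sum_congr rfl fun S _ => (hpeel S).symm]
  have hsumeq : ∑ u : Fin (i + j + 1) → Bool,
      (if j ≤ (Finset.univ.filter (fun m : Fin (i + j) => u m.castSucc = true)).card then
        (Nat.choose
            ((Finset.univ.filter (fun m : Fin (i + j) => u m.castSucc = true)).card) j : ℝ)
          * wordDensity u f
      else 0)
      = ((i+j+1).factorial : ℝ)
          * ∑ S ∈ Finset.powersetCard j (Finset.univ : Finset (Fin (i+j))),
              simInt (pat f (S.map Fin.castSuccEmb)) 1 := by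
    rw [← hkey, Finset.mul_sum]
    refine Finset.sum_congr rfl fun u _ => ?_
    rw [hterm u]
    ring
  rw [hLHS, hsumeq]
  have hne : ((i+j+1).factorial : ℝ) ≠ 0 :=
    Nat.cast_ne_zero.2 (Nat.factorial_ne_zero _)
  field_simp

end S12

theorem stmt12 (f : ℝ → ℝ) (hf : Measurable f)
    (hf1 : ∀ x ∈ Set.Icc (0:ℝ) 1, f x ∈ Set.Icc (0:ℝ) 1) (i j : ℕ) :
    ∫ x in (0:ℝ)..1, x ^ i * (∫ t in (0:ℝ)..x, f t) ^ j =
      ((Nat.factorial i : ℝ) * (Nat.factorial j : ℝ) / (Nat.factorial (i + j + 1) : ℝ)) *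
        ∑ u : Fin (i + j + 1) → Bool,
          (if j ≤ (Finset.univ.filter (fun m : Fin (i + j) => u m.castSucc = true)).card then
            (Nat.choose
                ((Finset.univ.filter (fun m : Fin (i + j) => u m.castSucc = true)).card) j : ℝ) *
              wordDensity u f
          else 0) := by
  classical
  set f' := (Set.Icc (0:ℝ) 1).indicator f with hf'def
  have hf'm : Measurable f' := hf.indicator measurableSet_Icc
  have hf'01 : ∀ t, f' t ∈ Set.Icc (0:ℝ) 1 := by
    intro t
    by_cases ht : t ∈ Set.Icc (0:ℝ) 1
    · rw [hf'def]
      simp only [Set.indicator_of_mem ht]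
      exact hf1 t ht
    · rw [hf'def]
      simp only [Set.indicator_of_notMem ht]
      exact ⟨le_rfl, zero_le_one⟩
  have hEq : Set.EqOn f f' (Set.Icc (0:ℝ) 1) := fun t ht => (Set.indicator_of_mem ht f).symm
  have hL : ∫ x in (0:ℝ)..1, x ^ i * (∫ t in (0:ℝ)..x, f t) ^ j
      = ∫ x in (0:ℝ)..1, x ^ i * (∫ t in (0:ℝ)..x, f' t) ^ j := by
    refine intervalIntegral.integral_congr fun x hx => ?_
    rw [Set.uIcc_of_le zero_le_one] at hx
    congr 2
    refine intervalIntegral.integral_congr fun t ht => ?_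
    rw [Set.uIcc_of_le hx.1] at ht
    exact hEq ⟨ht.1, ht.2.trans hx.2⟩
  have hW : ∀ u : Fin (i+j+1) → Bool, wordDensity u f = wordDensity u f' := by
    intro u
    rw [wordDensity, wordDensity]
    congr 1
    refine setIntegral_congr_fun (S12.measurableSet_simSet (i+j+1) 1) fun x hx => ?_
    refine Finset.prod_congr rfl fun k _ => ?_
    have hxk : x k ∈ Set.Icc (0:ℝ) 1 := hx.1 k
    by_cases hk : u k = true
    · rw [if_pos hk, if_pos hk]
      exact hEq hxk
    · rw [if_neg hk, if_neg hk, hEq hxk]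
  calc ∫ x in (0:ℝ)..1, x ^ i * (∫ t in (0:ℝ)..x, f t) ^ j
      = ∫ x in (0:ℝ)..1, x ^ i * (∫ t in (0:ℝ)..x, f' t) ^ j := hL
    _ = ((Nat.factorial i : ℝ) * (Nat.factorial j : ℝ) / (Nat.factorial (i + j + 1) : ℝ)) *
        ∑ u : Fin (i + j + 1) → Bool,
          (if j ≤ (Finset.univ.filter (fun m : Fin (i + j) => u m.castSucc = true)).card then
            (Nat.choose
                ((Finset.univ.filter (fun m : Fin (i + j) => u m.castSucc = true)).card) j : ℝ) *
              wordDensity u f'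
          else 0) := S12.main_global f' hf'm hf'01 i j
    _ = ((Nat.factorial i : ℝ) * (Nat.factorial j : ℝ) / (Nat.factorial (i + j + 1) : ℝ)) *
        ∑ u : Fin (i + j + 1) → Bool,
          (if j ≤ (Finset.univ.filter (fun m : Fin (i + j) => u m.castSucc = true)).card then
            (Nat.choose
                ((Finset.univ.filter (fun m : Fin (i + j) => u m.castSucc = true)).card) j : ℝ) *
              wordDensity u f
          else 0) := by
        congr 1
        refine Finset.sum_congr rfl fun u _ => ?_
        rw [hW u]
end

section
/- Every constant function f ≡ a ∈ [0,1] on [0,1] is finitely forcible by words of length at most three: if h : [0,1] → [0,1] is measurable and t(u,h) = t(u,f) for all binary words u of length at most 3, then h = a almost everywhere. -/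
open MeasureTheory

namespace ForcibleAux

open Set

/-- The ordered region is measurable. -/
lemma measurableSet_region (ℓ : ℕ) :
    MeasurableSet {x : Fin ℓ → ℝ |
      (∀ i, x i ∈ Set.Icc (0:ℝ) 1) ∧ (∀ i j : Fin ℓ, i < j → x i < x j)} := by
  have h1 : {x : Fin ℓ → ℝ | ∀ i, x i ∈ Set.Icc (0:ℝ) 1}
      = ⋂ i, (fun x : Fin ℓ → ℝ => x i) ⁻¹' Set.Icc (0:ℝ) 1 := by
    ext x; simp
  have h2 : {x : Fin ℓ → ℝ | ∀ i j : Fin ℓ, i < j → x i < x j}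
      = ⋂ i, ⋂ j, ⋂ (_ : i < j), {x : Fin ℓ → ℝ | x i < x j} := by
    ext x; simp
  rw [Set.setOf_and, h1, h2]
  refine MeasurableSet.inter (MeasurableSet.iInter fun i =>
    (measurable_pi_apply i) measurableSet_Icc) ?_
  exact MeasurableSet.iInter fun i => MeasurableSet.iInter fun j =>
    MeasurableSet.iInter fun _ =>
      measurableSet_lt (measurable_pi_apply i) (measurable_pi_apply j)

lemma wordDensity_congr {ℓ : ℕ} (u : Fin ℓ → Bool) {f g : ℝ → ℝ}
    (hfg : ∀ x ∈ Set.Icc (0:ℝ) 1, f x = g x) :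
    wordDensity u f = wordDensity u g := by
  unfold wordDensity
  congr 1
  refine setIntegral_congr_fun (measurableSet_region ℓ) fun x hx => ?_
  exact Finset.prod_congr rfl fun i _ => by rw [hfg _ (hx.1 i)]

/-- bounded measurable functions are interval integrable -/
lemma II {ψ : ℝ → ℝ} (hψ : Measurable ψ) (hb : ∀ x, |ψ x| ≤ 1) (u v : ℝ) :
    IntervalIntegrable ψ volume u v := by
  rw [intervalIntegrable_iff]
  refine Measure.integrableOn_of_bounded ?_ hψ.aestronglyMeasurable (M := 1)
    (ae_of_all _ fun x => by simpa using hb x)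
  rw [Set.uIoc, Real.volume_Ioc]
  exact ENNReal.ofReal_ne_top

end ForcibleAux
namespace ForcibleAux

open Set

lemma forall3 {P : Fin 3 → Prop} : (∀ i, P i) ↔ P 0 ∧ P 1 ∧ P 2 :=
  ⟨fun h => ⟨h 0, h 1, h 2⟩, fun ⟨a, b, c⟩ i => by fin_cases i <;> assumption⟩

lemma order2 (x : Fin 2 → ℝ) : (∀ i j : Fin 2, i < j → x i < x j) ↔ x 0 < x 1 := by
  constructor
  · intro H; exact H 0 1 (by decide)
  · intro H i j hij
    fin_cases i <;> fin_cases j <;>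
      first
        | exact absurd hij (by decide)
        | simpa using H

lemma order3 (x : Fin 3 → ℝ) :
    (∀ i j : Fin 3, i < j → x i < x j) ↔ x 0 < x 1 ∧ x 1 < x 2 := by
  constructor
  · intro H; exact ⟨H 0 1 (by decide), H 1 2 (by decide)⟩
  · rintro ⟨h1, h2⟩ i j hij
    fin_cases i <;> fin_cases j <;>
      first
        | exact absurd hij (by decide)
        | simpa using h1
        | simpa using h2
        | simpa using h1.trans h2

lemma integrable_indicator_box {γ : Type*} [MeasurableSpace γ] (μ : Measure γ)
    {s K : Set γ} (hs : MeasurableSet s) (hK : MeasurableSet K) (hfin : μ K ≠ ⊤)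
    (hsub : s ⊆ K) {φ : γ → ℝ} (hφ : Measurable φ) (hb : ∀ p ∈ s, |φ p| ≤ 1) :
    Integrable (s.indicator φ) μ := by
  refine Integrable.mono' (g := K.indicator fun _ => (1:ℝ)) ?_
    ((hφ.indicator hs).aestronglyMeasurable) (ae_of_all _ fun p => ?_)
  · rw [integrable_indicator_iff hK]
    exact integrableOn_const hfin
  · by_cases hp : p ∈ s
    · rw [Set.indicator_of_mem hp, Set.indicator_of_mem (hsub hp)]
      simpa using hb p hp
    · rw [Set.indicator_of_notMem hp]
      simpa using Set.indicator_nonneg (fun _ (_ : _ ∈ K) => zero_le_one) p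

lemma measurableSet_stepSet {J : Set ℝ} (hJ : MeasurableSet J) :
    MeasurableSet {p : ℝ × ℝ | p.1 ∈ J ∧ p.2 ∈ Set.Ioc p.1 1} := by
  have : {p : ℝ × ℝ | p.1 ∈ J ∧ p.2 ∈ Set.Ioc p.1 1}
      = (Prod.fst ⁻¹' J) ∩ ({p : ℝ × ℝ | p.1 < p.2} ∩ Prod.snd ⁻¹' Set.Iic 1) := by
    ext p; simp [Set.mem_Ioc, and_assoc]
  rw [this]
  exact (measurable_fst hJ).inter
    ((measurableSet_lt measurable_fst measurable_snd).inter (measurable_snd measurableSet_Iic))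

lemma stepSet_subset {J : Set ℝ} (hJsub : J ⊆ Set.Icc (0:ℝ) 1) :
    {p : ℝ × ℝ | p.1 ∈ J ∧ p.2 ∈ Set.Ioc p.1 1} ⊆ Set.Icc (0:ℝ) 1 ×ˢ Set.Icc (0:ℝ) 1 := by
  rintro ⟨p1, p2⟩ ⟨h1, h2⟩
  exact ⟨hJsub h1, ⟨le_trans (hJsub h1).1 h2.1.le, h2.2⟩⟩

lemma box_ne_top : ((volume : Measure ℝ).prod volume) (Set.Icc (0:ℝ) 1 ×ˢ Set.Icc (0:ℝ) 1) ≠ ⊤ := by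
  rw [Measure.prod_prod, Real.volume_Icc]
  exact ENNReal.mul_ne_top ENNReal.ofReal_ne_top ENNReal.ofReal_ne_top

lemma fubini_step {J : Set ℝ} (hJ : MeasurableSet J) (hJsub : J ⊆ Set.Icc (0:ℝ) 1)
    {g₁ g₂ : ℝ → ℝ} (h₁ : Measurable g₁) (h₂ : Measurable g₂)
    (b₁ : ∀ x ∈ Set.Icc (0:ℝ) 1, |g₁ x| ≤ 1) (b₂ : ∀ x ∈ Set.Icc (0:ℝ) 1, |g₂ x| ≤ 1) :
    ∫ p : ℝ × ℝ, ({p : ℝ × ℝ | p.1 ∈ J ∧ p.2 ∈ Set.Ioc p.1 1}).indicator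
        (fun p => g₁ p.1 * g₂ p.2) p ∂((volume : Measure ℝ).prod volume)
      = ∫ x in J, g₁ x * ∫ y in x..1, g₂ y := by
  set T := {p : ℝ × ℝ | p.1 ∈ J ∧ p.2 ∈ Set.Ioc p.1 1} with hTdef
  have hT : MeasurableSet T := measurableSet_stepSet hJ
  have hφ : Measurable fun p : ℝ × ℝ => g₁ p.1 * g₂ p.2 :=
    (h₁.comp measurable_fst).mul (h₂.comp measurable_snd)
  have hb : ∀ p ∈ T, |g₁ p.1 * g₂ p.2| ≤ 1 := by
    rintro ⟨p1, p2⟩ hp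
    have h1 := (stepSet_subset hJsub) hp
    rw [abs_mul]
    exact mul_le_one₀ (b₁ _ h1.1) (abs_nonneg _) (b₂ _ h1.2)
  have hint : Integrable (T.indicator fun p : ℝ × ℝ => g₁ p.1 * g₂ p.2)
      ((volume : Measure ℝ).prod volume) :=
    integrable_indicator_box _ hT (measurableSet_Icc.prod measurableSet_Icc) box_ne_top
      (stepSet_subset hJsub) hφ hb
  rw [MeasureTheory.integral_prod _ hint]
  have key : ∀ x : ℝ, (∫ y, T.indicator (fun p : ℝ × ℝ => g₁ p.1 * g₂ p.2) (x, y))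
      = J.indicator (fun x => g₁ x * ∫ y in x..1, g₂ y) x := by
    intro x
    by_cases hx : x ∈ J
    · have hx' := hJsub hx
      have hfun : (fun y => T.indicator (fun p : ℝ × ℝ => g₁ p.1 * g₂ p.2) (x, y))
          = (Set.Ioc x 1).indicator (fun y => g₁ x * g₂ y) := by
        funext y
        by_cases hy : y ∈ Set.Ioc x 1
        · rw [Set.indicator_of_mem hy, Set.indicator_of_mem (show (x, y) ∈ T from ⟨hx, hy⟩)]
        · rw [Set.indicator_of_notMem hy,
            Set.indicator_of_notMem (fun hmem => hy hmem.2)]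
      rw [hfun, MeasureTheory.integral_indicator measurableSet_Ioc,
        ← intervalIntegral.integral_of_le hx'.2, intervalIntegral.integral_const_mul,
        Set.indicator_of_mem hx]
    · have hfun : (fun y => T.indicator (fun p : ℝ × ℝ => g₁ p.1 * g₂ p.2) (x, y))
          = fun _ => (0:ℝ) := by
        funext y
        exact Set.indicator_of_notMem (fun hmem => hx hmem.1) _
      rw [hfun, MeasureTheory.integral_zero, Set.indicator_of_notMem hx]
  simp only [key]
  rw [MeasureTheory.integral_indicator hJ]

end ForcibleAux
namespace ForcibleAux

open Set

lemma L1 (g : ℝ → ℝ) :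
    (∫ x : Fin 1 → ℝ in
        {x | (∀ i, x i ∈ Set.Icc (0:ℝ) 1) ∧ (∀ i j : Fin 1, i < j → x i < x j)},
        g (x 0))
      = ∫ x in (0:ℝ)..1, g x := by
  have hpre : (⇑(MeasurableEquiv.funUnique (Fin 1) ℝ).symm) ⁻¹'
      {x : Fin 1 → ℝ | (∀ i, x i ∈ Set.Icc (0:ℝ) 1) ∧ (∀ i j : Fin 1, i < j → x i < x j)}
      = Set.Icc (0:ℝ) 1 := by
    ext z
    simp only [Set.mem_preimage, Set.mem_setOf_eq]
    constructor
    · intro hz; exact hz.1 0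
    · intro hz
      refine ⟨fun i => hz, fun i j hij => absurd hij ?_⟩
      fin_cases i <;> fin_cases j <;> decide
  calc (∫ x : Fin 1 → ℝ in
        {x | (∀ i, x i ∈ Set.Icc (0:ℝ) 1) ∧ (∀ i j : Fin 1, i < j → x i < x j)}, g (x 0))
      = ∫ z : ℝ in (⇑(MeasurableEquiv.funUnique (Fin 1) ℝ).symm ⁻¹'
          {x : Fin 1 → ℝ | (∀ i, x i ∈ Set.Icc (0:ℝ) 1) ∧
            (∀ i j : Fin 1, i < j → x i < x j)}), g z :=
        (((volume_preserving_funUnique (Fin 1) ℝ).symm _).setIntegral_preimage_emb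
          (MeasurableEquiv.measurableEmbedding _) (fun x : Fin 1 → ℝ => g (x 0)) _).symm
    _ = ∫ z : ℝ in Set.Icc (0:ℝ) 1, g z := by rw [hpre]
    _ = ∫ x in (0:ℝ)..1, g x := by
        rw [MeasureTheory.integral_Icc_eq_integral_Ioc,
          ← intervalIntegral.integral_of_le zero_le_one]

lemma L2 {g₁ g₂ : ℝ → ℝ} (h₁ : Measurable g₁) (h₂ : Measurable g₂)
    (b₁ : ∀ x ∈ Set.Icc (0:ℝ) 1, |g₁ x| ≤ 1) (b₂ : ∀ x ∈ Set.Icc (0:ℝ) 1, |g₂ x| ≤ 1) :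
    (∫ x : Fin 2 → ℝ in
        {x | (∀ i, x i ∈ Set.Icc (0:ℝ) 1) ∧ (∀ i j : Fin 2, i < j → x i < x j)},
        g₁ (x 0) * g₂ (x 1))
      = ∫ x in (0:ℝ)..1, g₁ x * ∫ y in x..1, g₂ y := by
  have hpre : (⇑(MeasurableEquiv.finTwoArrow (α := ℝ)).symm) ⁻¹'
      {x : Fin 2 → ℝ | (∀ i, x i ∈ Set.Icc (0:ℝ) 1) ∧ (∀ i j : Fin 2, i < j → x i < x j)}
      = {p : ℝ × ℝ | p.1 ∈ Set.Icc (0:ℝ) 1 ∧ p.2 ∈ Set.Ioc p.1 1} := by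
    ext p
    simp only [Set.mem_preimage, Set.mem_setOf_eq, order2, Fin.forall_fin_two,
      MeasurableEquiv.finTwoArrow_symm_apply, Fin.cons_zero, Fin.cons_one,
      Set.mem_Icc, Set.mem_Ioc]
    constructor
    · rintro ⟨⟨hp1, hp2⟩, hlt⟩; exact ⟨hp1, hlt.1.2 (by decide), hp2.2⟩
    · rintro ⟨hp1, hlt, hle⟩
      exact ⟨⟨hp1, ⟨le_trans hp1.1 hlt.le, hle⟩⟩,
        ⟨⟨fun h => absurd h (lt_irrefl _), fun _ => hlt⟩,
         fun h => absurd h (by decide), fun h => absurd h (lt_irrefl _)⟩⟩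
  have hT : MeasurableSet {p : ℝ × ℝ | p.1 ∈ Set.Icc (0:ℝ) 1 ∧ p.2 ∈ Set.Ioc p.1 1} :=
    measurableSet_stepSet measurableSet_Icc
  calc (∫ x : Fin 2 → ℝ in
        {x | (∀ i, x i ∈ Set.Icc (0:ℝ) 1) ∧ (∀ i j : Fin 2, i < j → x i < x j)},
        g₁ (x 0) * g₂ (x 1))
      = ∫ p : ℝ × ℝ in {p : ℝ × ℝ | p.1 ∈ Set.Icc (0:ℝ) 1 ∧ p.2 ∈ Set.Ioc p.1 1},
          g₁ p.1 * g₂ p.2 := by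
        rw [← hpre]
        exact (((volume_preserving_finTwoArrow ℝ).symm _).setIntegral_preimage_emb
          (MeasurableEquiv.measurableEmbedding _)
          (fun x : Fin 2 → ℝ => g₁ (x 0) * g₂ (x 1)) _).symm
    _ = ∫ x in Set.Icc (0:ℝ) 1, g₁ x * ∫ y in x..1, g₂ y := by
        rw [← MeasureTheory.integral_indicator hT, Measure.volume_eq_prod,
          fubini_step measurableSet_Icc (fun x hx => hx) h₁ h₂ b₁ b₂]
    _ = ∫ x in (0:ℝ)..1, g₁ x * ∫ y in x..1, g₂ y := by
        rw [MeasureTheory.integral_Icc_eq_integral_Ioc,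
          ← intervalIntegral.integral_of_le zero_le_one]

end ForcibleAux
namespace ForcibleAux

open Set

lemma pibox_ne_top :
    ((volume : Measure ℝ).prod (volume : Measure (Fin 2 → ℝ)))
      (Set.Icc (0:ℝ) 1 ×ˢ Set.pi Set.univ fun _ : Fin 2 => Set.Icc (0:ℝ) 1) ≠ ⊤ := by
  rw [Measure.prod_prod, Real.volume_Icc, volume_pi_pi]
  simp [Real.volume_Icc]

lemma L3 {g₁ g₂ g₃ : ℝ → ℝ} (h₁ : Measurable g₁) (h₂ : Measurable g₂) (h₃ : Measurable g₃)
    (b₁ : ∀ x ∈ Set.Icc (0:ℝ) 1, |g₁ x| ≤ 1) (b₂ : ∀ x ∈ Set.Icc (0:ℝ) 1, |g₂ x| ≤ 1)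
    (b₃ : ∀ x ∈ Set.Icc (0:ℝ) 1, |g₃ x| ≤ 1) :
    (∫ x : Fin 3 → ℝ in
        {x | (∀ i, x i ∈ Set.Icc (0:ℝ) 1) ∧ (∀ i j : Fin 3, i < j → x i < x j)},
        g₁ (x 0) * (g₂ (x 1) * g₃ (x 2)))
      = ∫ x in (0:ℝ)..1, g₁ x * ∫ y in x..1, g₂ y * ∫ z in y..1, g₃ z := by
  set T : Set (ℝ × (Fin 2 → ℝ)) :=
    {q : ℝ × (Fin 2 → ℝ) |
      (q.1 ∈ Set.Icc (0:ℝ) 1 ∧ q.2 0 ∈ Set.Icc (0:ℝ) 1 ∧ q.2 1 ∈ Set.Icc (0:ℝ) 1)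
      ∧ (q.1 < q.2 0 ∧ q.2 0 < q.2 1)} with hTdef
  have m1 : Measurable fun q : ℝ × (Fin 2 → ℝ) => q.2 0 :=
    (measurable_pi_apply 0).comp measurable_snd
  have m2 : Measurable fun q : ℝ × (Fin 2 → ℝ) => q.2 1 :=
    (measurable_pi_apply 1).comp measurable_snd
  have hT : MeasurableSet T := by
    refine MeasurableSet.inter ?_ ?_
    · exact ((measurable_fst measurableSet_Icc).inter
        ((m1 measurableSet_Icc).inter (m2 measurableSet_Icc)))
    · exact (measurableSet_lt measurable_fst m1).inter (measurableSet_lt m1 m2)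
  have hsub : T ⊆ Set.Icc (0:ℝ) 1 ×ˢ Set.pi Set.univ fun _ : Fin 2 => Set.Icc (0:ℝ) 1 := by
    rintro ⟨x, y⟩ ⟨⟨hx, hy0, hy1⟩, _⟩
    refine ⟨hx, fun i _ => ?_⟩
    fin_cases i
    · exact hy0
    · exact hy1
  have hΦ : Measurable fun q : ℝ × (Fin 2 → ℝ) => g₁ q.1 * (g₂ (q.2 0) * g₃ (q.2 1)) :=
    (h₁.comp measurable_fst).mul ((h₂.comp m1).mul (h₃.comp m2))
  have hb : ∀ q ∈ T, |g₁ q.1 * (g₂ (q.2 0) * g₃ (q.2 1))| ≤ 1 := by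
    rintro ⟨x, y⟩ ⟨⟨hx, hy0, hy1⟩, _⟩
    rw [abs_mul, abs_mul]
    exact mul_le_one₀ (b₁ _ hx) (mul_nonneg (abs_nonneg _) (abs_nonneg _))
      (mul_le_one₀ (b₂ _ hy0) (abs_nonneg _) (b₃ _ hy1))
  have hint : Integrable
      (T.indicator fun q : ℝ × (Fin 2 → ℝ) => g₁ q.1 * (g₂ (q.2 0) * g₃ (q.2 1)))
      ((volume : Measure ℝ).prod volume) :=
    integrable_indicator_box _ hT
      (measurableSet_Icc.prod (MeasurableSet.univ_pi fun _ => measurableSet_Icc))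
      pibox_ne_top hsub hΦ hb
  have hpre : (⇑(MeasurableEquiv.piFinSuccAbove (fun _ : Fin 3 => ℝ) 0).symm) ⁻¹'
      {x : Fin 3 → ℝ | (∀ i, x i ∈ Set.Icc (0:ℝ) 1) ∧ (∀ i j : Fin 3, i < j → x i < x j)}
      = T := by
    ext q
    simp only [Set.mem_preimage, Set.mem_setOf_eq, hTdef]
    constructor
    · rintro ⟨hi, ho⟩
      exact ⟨⟨hi 0, hi 1, hi 2⟩, ho 0 1 (by decide), ho 1 2 (by decide)⟩
    · rintro ⟨⟨ha0, ha1, ha2⟩, hlt1, hlt2⟩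
      constructor
      · intro i
        fin_cases i
        · exact ha0
        · exact ha1
        · exact ha2
      · intro i j hij
        have key := (order3 ((MeasurableEquiv.piFinSuccAbove (fun _ : Fin 3 => ℝ) 0).symm q)).2
          ⟨hlt1, hlt2⟩
        exact key i j hij
  calc (∫ x : Fin 3 → ℝ in
        {x | (∀ i, x i ∈ Set.Icc (0:ℝ) 1) ∧ (∀ i j : Fin 3, i < j → x i < x j)},
        g₁ (x 0) * (g₂ (x 1) * g₃ (x 2)))
      = ∫ q : ℝ × (Fin 2 → ℝ) in
          (⇑(MeasurableEquiv.piFinSuccAbove (fun _ : Fin 3 => ℝ) 0).symm) ⁻¹'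
            {x : Fin 3 → ℝ | (∀ i, x i ∈ Set.Icc (0:ℝ) 1) ∧
              (∀ i j : Fin 3, i < j → x i < x j)},
          g₁ q.1 * (g₂ (q.2 0) * g₃ (q.2 1)) :=
        (((volume_preserving_piFinSuccAbove (fun _ : Fin 3 => ℝ) 0).symm _).setIntegral_preimage_emb
          (MeasurableEquiv.measurableEmbedding _)
          (fun x : Fin 3 → ℝ => g₁ (x 0) * (g₂ (x 1) * g₃ (x 2))) _).symm
    _ = ∫ q : ℝ × (Fin 2 → ℝ) in T, g₁ q.1 * (g₂ (q.2 0) * g₃ (q.2 1)) := by rw [hpre]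
    _ = ∫ x in (0:ℝ)..1, g₁ x * ∫ y in x..1, g₂ y * ∫ z in y..1, g₃ z := by
        rw [← MeasureTheory.integral_indicator hT, Measure.volume_eq_prod,
          MeasureTheory.integral_prod _ hint]
        have key : ∀ x : ℝ,
            (∫ y : Fin 2 → ℝ,
              T.indicator (fun q : ℝ × (Fin 2 → ℝ) => g₁ q.1 * (g₂ (q.2 0) * g₃ (q.2 1))) (x, y))
            = (Set.Icc (0:ℝ) 1).indicator
                (fun x => g₁ x * ∫ y in x..1, g₂ y * ∫ z in y..1, g₃ z) x := by
          intro x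
          rw [← MeasurePreserving.integral_comp ((volume_preserving_finTwoArrow ℝ).symm _)
            (MeasurableEquiv.measurableEmbedding _)
            (fun y : Fin 2 → ℝ =>
              T.indicator (fun q : ℝ × (Fin 2 → ℝ) => g₁ q.1 * (g₂ (q.2 0) * g₃ (q.2 1))) (x, y))]
          by_cases hx : x ∈ Set.Icc (0:ℝ) 1
          · have hfun : (fun p : ℝ × ℝ =>
                T.indicator (fun q : ℝ × (Fin 2 → ℝ) => g₁ q.1 * (g₂ (q.2 0) * g₃ (q.2 1)))
                  (x, (MeasurableEquiv.finTwoArrow (α := ℝ)).symm p))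
                = fun p : ℝ × ℝ => g₁ x *
                    ({p : ℝ × ℝ | p.1 ∈ Set.Ioc x 1 ∧ p.2 ∈ Set.Ioc p.1 1}.indicator
                      (fun p => g₂ p.1 * g₃ p.2) p) := by
              funext p
              by_cases hp : p.1 ∈ Set.Ioc x 1 ∧ p.2 ∈ Set.Ioc p.1 1
              · have hmem : ((x, (MeasurableEquiv.finTwoArrow (α := ℝ)).symm p)) ∈ T := by
                  refine ⟨⟨hx, ?_, ?_⟩, ?_, ?_⟩
                  · exact ⟨le_trans hx.1 hp.1.1.le, hp.1.2⟩
                  · exact ⟨le_trans (le_trans hx.1 hp.1.1.le) hp.2.1.le, hp.2.2⟩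
                  · exact hp.1.1
                  · exact hp.2.1
                rw [Set.indicator_of_mem hmem, Set.indicator_of_mem
                  (show p ∈ {p : ℝ × ℝ | p.1 ∈ Set.Ioc x 1 ∧ p.2 ∈ Set.Ioc p.1 1} from hp)]
                rfl
              · have hmem : ((x, (MeasurableEquiv.finTwoArrow (α := ℝ)).symm p)) ∉ T := by
                  intro hmem
                  exact hp ⟨⟨hmem.2.1, hmem.1.2.1.2⟩, ⟨hmem.2.2, hmem.1.2.2.2⟩⟩
                rw [Set.indicator_of_notMem hmem, Set.indicator_of_notMem
                  (show p ∉ {p : ℝ × ℝ | p.1 ∈ Set.Ioc x 1 ∧ p.2 ∈ Set.Ioc p.1 1} from hp),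
                  mul_zero]
            have hsub' : Set.Ioc x 1 ⊆ Set.Icc (0:ℝ) 1 :=
              fun y hy => ⟨le_trans hx.1 hy.1.le, hy.2⟩
            rw [hfun, MeasureTheory.integral_const_mul, Measure.volume_eq_prod,
              fubini_step measurableSet_Ioc hsub' h₂ h₃ b₂ b₃,
              ← intervalIntegral.integral_of_le hx.2, Set.indicator_of_mem hx]
          · have hfun : (fun p : ℝ × ℝ =>
                T.indicator (fun q : ℝ × (Fin 2 → ℝ) => g₁ q.1 * (g₂ (q.2 0) * g₃ (q.2 1)))
                  (x, (MeasurableEquiv.finTwoArrow (α := ℝ)).symm p))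
                = fun _ => (0:ℝ) := by
              funext p
              exact Set.indicator_of_notMem (fun hmem => hx hmem.1.1) _
            rw [hfun, MeasureTheory.integral_zero, Set.indicator_of_notMem hx]
        simp only [key]
        rw [MeasureTheory.integral_indicator measurableSet_Icc,
          MeasureTheory.integral_Icc_eq_integral_Ioc,
          ← intervalIntegral.integral_of_le zero_le_one]

end ForcibleAux
namespace ForcibleAux

open Set

lemma swap2 {φ ψ : ℝ → ℝ} (hφ : Measurable φ) (hψ : Measurable ψ)
    (bφ : ∀ x ∈ Set.Icc (0:ℝ) 1, |φ x| ≤ 1) (bψ : ∀ x ∈ Set.Icc (0:ℝ) 1, |ψ x| ≤ 1) :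
    ∫ x in (0:ℝ)..1, φ x * ∫ y in x..1, ψ y
      = ∫ y in (0:ℝ)..1, ψ y * ∫ x in (0:ℝ)..y, φ x := by
  set U := {p : ℝ × ℝ | p.1 ∈ Set.Icc (0:ℝ) 1 ∧ p.2 ∈ Set.Ioc p.1 1} with hUdef
  have hU : MeasurableSet U := measurableSet_stepSet measurableSet_Icc
  have hΦ : Measurable fun p : ℝ × ℝ => φ p.1 * ψ p.2 :=
    (hφ.comp measurable_fst).mul (hψ.comp measurable_snd)
  have hb : ∀ p ∈ U, |φ p.1 * ψ p.2| ≤ 1 := by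
    rintro ⟨p1, p2⟩ hp
    have h1 := (stepSet_subset (fun x hx => hx)) hp
    rw [abs_mul]
    exact mul_le_one₀ (bφ _ h1.1) (abs_nonneg _) (bψ _ h1.2)
  have hint : Integrable (U.indicator fun p : ℝ × ℝ => φ p.1 * ψ p.2)
      ((volume : Measure ℝ).prod volume) :=
    integrable_indicator_box _ hU (measurableSet_Icc.prod measurableSet_Icc) box_ne_top
      (stepSet_subset (fun x hx => hx)) hΦ hb
  have h1 : (∫ p : ℝ × ℝ, U.indicator (fun p : ℝ × ℝ => φ p.1 * ψ p.2) p
      ∂((volume : Measure ℝ).prod volume)) = ∫ x in Set.Icc (0:ℝ) 1, φ x * ∫ y in x..1, ψ y :=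
    fubini_step measurableSet_Icc (fun x hx => hx) hφ hψ bφ bψ
  have h2 : (∫ p : ℝ × ℝ, U.indicator (fun p : ℝ × ℝ => φ p.1 * ψ p.2) p
      ∂((volume : Measure ℝ).prod volume))
      = ∫ y in Set.Ioc (0:ℝ) 1, ψ y * ∫ x in (0:ℝ)..y, φ x := by
    rw [MeasureTheory.integral_prod_symm _ hint]
    have key : ∀ y : ℝ, (∫ x, U.indicator (fun p : ℝ × ℝ => φ p.1 * ψ p.2) (x, y))
        = (Set.Ioc (0:ℝ) 1).indicator (fun y => ψ y * ∫ x in (0:ℝ)..y, φ x) y := by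
      intro y
      by_cases hy : y ∈ Set.Ioc (0:ℝ) 1
      · have hfun : (fun x => U.indicator (fun p : ℝ × ℝ => φ p.1 * ψ p.2) (x, y))
            = (Set.Ico (0:ℝ) y).indicator (fun x => φ x * ψ y) := by
          funext x
          by_cases hxy : x ∈ Set.Ico (0:ℝ) y
          · rw [Set.indicator_of_mem
                (show (x, y) ∈ U from ⟨⟨hxy.1, (hxy.2.trans_le hy.2).le⟩, ⟨hxy.2, hy.2⟩⟩),
              Set.indicator_of_mem hxy]
          · rw [Set.indicator_of_notMem
                (show (x, y) ∉ U from fun hmem => hxy ⟨hmem.1.1, hmem.2.1⟩),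
              Set.indicator_of_notMem hxy]
        rw [hfun, MeasureTheory.integral_indicator measurableSet_Ico,
          MeasureTheory.integral_Ico_eq_integral_Ioo,
          ← MeasureTheory.integral_Ioc_eq_integral_Ioo,
          ← intervalIntegral.integral_of_le hy.1.le,
          intervalIntegral.integral_mul_const, Set.indicator_of_mem hy, mul_comm]
      · have hfun : (fun x => U.indicator (fun p : ℝ × ℝ => φ p.1 * ψ p.2) (x, y))
            = fun _ => (0:ℝ) := by
          funext x
          refine Set.indicator_of_notMem ?_ _
          intro hmem
          exact hy ⟨lt_of_le_of_lt hmem.1.1 hmem.2.1, hmem.2.2⟩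
        rw [hfun, MeasureTheory.integral_zero, Set.indicator_of_notMem hy]
    simp only [key]
    rw [MeasureTheory.integral_indicator measurableSet_Ioc]
  rw [intervalIntegral.integral_of_le zero_le_one, ← MeasureTheory.integral_Icc_eq_integral_Ioc,
    ← h1, h2, ← intervalIntegral.integral_of_le zero_le_one]

end ForcibleAux
namespace ForcibleAux

open Set

lemma abs_le_one_of_mem {t : ℝ} (h : t ∈ Set.Icc (0:ℝ) 1) : |t| ≤ 1 :=
  abs_le.2 ⟨by linarith [h.1], h.2⟩

noncomputable def bsel (f : ℝ → ℝ) (b : Bool) : ℝ → ℝ := fun x => if b then f x else 1 - f x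

lemma bsel_true (f : ℝ → ℝ) : bsel f true = f := rfl

lemma bsel_measurable {f : ℝ → ℝ} (hf : Measurable f) (b : Bool) : Measurable (bsel f b) := by
  cases b
  · exact (show Measurable fun x => 1 - f x from measurable_const.sub hf)
  · exact hf

lemma bsel_mem {f : ℝ → ℝ} (h01 : ∀ x, f x ∈ Set.Icc (0:ℝ) 1) (b : Bool) (x : ℝ) :
    bsel f b x ∈ Set.Icc (0:ℝ) 1 := by
  obtain ⟨l, u⟩ := h01 x
  cases b
  · exact ⟨by simp [bsel]; linarith, by simp [bsel]; linarith⟩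
  · exact ⟨by simp [bsel]; linarith, by simp [bsel]; linarith⟩

lemma bsel_II {f : ℝ → ℝ} (hf : Measurable f) (h01 : ∀ x, f x ∈ Set.Icc (0:ℝ) 1) (b : Bool)
    (u v : ℝ) : IntervalIntegrable (bsel f b) volume u v :=
  II (bsel_measurable hf b) (fun x => abs_le_one_of_mem (bsel_mem h01 b x)) u v

noncomputable def Gf (f : ℝ → ℝ) : ℝ → ℝ := fun x => ∫ y in x..1, f y
noncomputable def Pf (f : ℝ → ℝ) : ℝ → ℝ := fun x => ∫ y in x..1, Gf f y
noncomputable def Qf (f : ℝ → ℝ) : ℝ → ℝ := fun x => ∫ y in (0:ℝ)..x, Gf f y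

lemma cont_tail {g : ℝ → ℝ} (hg : ∀ u v, IntervalIntegrable g volume u v) :
    Continuous fun x => ∫ y in x..1, g y := by
  have heq : (fun x => ∫ y in x..1, g y) = fun x => -∫ y in (1:ℝ)..x, g y :=
    funext fun x => intervalIntegral.integral_symm 1 x
  rw [heq]
  exact (intervalIntegral.continuous_primitive hg 1).neg

lemma Gf_cont {f : ℝ → ℝ} (hf : Measurable f) (h01 : ∀ x, f x ∈ Set.Icc (0:ℝ) 1) :
    Continuous (Gf f) :=
  cont_tail (II hf (fun x => abs_le_one_of_mem (h01 x)))

lemma Gf_mem {f : ℝ → ℝ} (hf : Measurable f) (h01 : ∀ x, f x ∈ Set.Icc (0:ℝ) 1)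
    {x : ℝ} (hx : x ∈ Set.Icc (0:ℝ) 1) : |Gf f x| ≤ 1 := by
  have hII := II hf (fun x => abs_le_one_of_mem (h01 x))
  have h1 : 0 ≤ Gf f x :=
    intervalIntegral.integral_nonneg hx.2 (fun y _ => (h01 y).1)
  have h2 : Gf f x ≤ 1 - x := by
    have := intervalIntegral.integral_mono_on (μ := volume) hx.2 (hII x 1)
      intervalIntegrable_const (fun y _ => (h01 y).2)
    simpa [Gf] using this
  exact abs_le.2 ⟨by linarith, by linarith [hx.1]⟩

lemma word1 {f : ℝ → ℝ} : wordDensity ![true] f = ∫ x in (0:ℝ)..1, f x := by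
  unfold wordDensity
  have hpt : ∀ x : Fin 1 → ℝ,
      (∏ i, (if ![true] i then f (x i) else 1 - f (x i))) = f (x 0) := by
    intro x; simp
  simp only [hpt]
  rw [L1 f]
  norm_num

lemma word2 {f : ℝ → ℝ} (hf : Measurable f) (h01 : ∀ x, f x ∈ Set.Icc (0:ℝ) 1) (b c : Bool) :
    wordDensity ![b, c] f
      = 2 * ∫ x in (0:ℝ)..1, bsel f b x * ∫ y in x..1, bsel f c y := by
  unfold wordDensity
  have hpt : ∀ x : Fin 2 → ℝ,
      (∏ i, (if ![b, c] i then f (x i) else 1 - f (x i)))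
        = bsel f b (x 0) * bsel f c (x 1) := by
    intro x
    rw [Fin.prod_univ_two]
    cases b <;> cases c <;> simp [bsel]
  simp only [hpt]
  rw [L2 (bsel_measurable hf b) (bsel_measurable hf c)
    (fun x _ => abs_le_one_of_mem (bsel_mem h01 b x))
    (fun x _ => abs_le_one_of_mem (bsel_mem h01 c x))]
  norm_num [Nat.factorial]

lemma word3 {f : ℝ → ℝ} (hf : Measurable f) (h01 : ∀ x, f x ∈ Set.Icc (0:ℝ) 1) (b c : Bool) :
    wordDensity ![b, c, true] f
      = 6 * ∫ x in (0:ℝ)..1, bsel f b x * ∫ y in x..1, bsel f c y * ∫ z in y..1, f z := by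
  unfold wordDensity
  have hpt : ∀ x : Fin 3 → ℝ,
      (∏ i, (if ![b, c, true] i then f (x i) else 1 - f (x i)))
        = bsel f b (x 0) * (bsel f c (x 1) * f (x 2)) := by
    intro x
    rw [Fin.prod_univ_three, mul_assoc]
    cases b <;> cases c <;> simp [bsel]
  simp only [hpt]
  rw [L3 (bsel_measurable hf b) (bsel_measurable hf c) hf
    (fun x _ => abs_le_one_of_mem (bsel_mem h01 b x))
    (fun x _ => abs_le_one_of_mem (bsel_mem h01 c x))
    (fun x _ => abs_le_one_of_mem (h01 x))]
  norm_num [Nat.factorial]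

end ForcibleAux
namespace ForcibleAux

open Set

lemma master {f : ℝ → ℝ} (hf : Measurable f) (h01 : ∀ x, f x ∈ Set.Icc (0:ℝ) 1) (a : ℝ) :
    ∫ x in (0:ℝ)..1, (Gf f x - a * (1 - x))^2
      = wordDensity ![true] f
          * ((wordDensity ![false, true] f + wordDensity ![true, true] f) / 2)
        - (wordDensity ![true, false, true] f + wordDensity ![true, true, true] f) / 6
        - 2 * a * ((wordDensity ![false, true] f + wordDensity ![true, true] f) / 2
          - (wordDensity ![false, false, true] f + wordDensity ![false, true, true] f
             + wordDensity ![true, false, true] f + wordDensity ![true, true, true] f) / 6)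
        + a^2 / 3 := by
  have hfa : ∀ x : ℝ, |f x| ≤ 1 := fun x => abs_le_one_of_mem (h01 x)
  have hfII : ∀ u v : ℝ, IntervalIntegrable f volume u v := II hf hfa
  have hG : Continuous (Gf f) := Gf_cont hf h01
  have hGa : ∀ x ∈ Set.Icc (0:ℝ) 1, |Gf f x| ≤ 1 := fun x hx => Gf_mem hf h01 hx
  have hGII : ∀ u v : ℝ, IntervalIntegrable (Gf f) volume u v :=
    fun u v => hG.intervalIntegrable u v
  have hP : Continuous (Pf f) := cont_tail hGII
  -- e2
  have e2 : wordDensity ![false, true] f + wordDensity ![true, true] f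
      = 2 * ∫ x in (0:ℝ)..1, Gf f x := by
    rw [word2 hf h01 false true, word2 hf h01 true true, ← mul_add,
      ← intervalIntegral.integral_add
        ((bsel_II hf h01 false 0 1).mul_continuousOn
          (cont_tail (bsel_II hf h01 true)).continuousOn)
        ((bsel_II hf h01 true 0 1).mul_continuousOn
          (cont_tail (bsel_II hf h01 true)).continuousOn)]
    congr 1
    apply intervalIntegral.integral_congr
    intro x _
    show bsel f false x * (∫ y in x..1, bsel f true y)
        + bsel f true x * (∫ y in x..1, bsel f true y) = Gf f x
    rw [bsel_true]
    show (1 - f x) * (∫ y in x..1, f y) + f x * (∫ y in x..1, f y) = ∫ y in x..1, f y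
    ring
  -- e3
  have e3 : ∀ b : Bool, wordDensity ![b, false, true] f + wordDensity ![b, true, true] f
      = 6 * ∫ x in (0:ℝ)..1, bsel f b x * Pf f x := by
    intro b
    have hin : ∀ c : Bool, Continuous fun x => ∫ y in x..1, bsel f c y * ∫ z in y..1, f z :=
      fun c => cont_tail (fun u v => (bsel_II hf h01 c u v).mul_continuousOn hG.continuousOn)
    rw [word3 hf h01 b false, word3 hf h01 b true, ← mul_add,
      ← intervalIntegral.integral_add
        ((bsel_II hf h01 b 0 1).mul_continuousOn (hin false).continuousOn)
        ((bsel_II hf h01 b 0 1).mul_continuousOn (hin true).continuousOn)]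
    congr 1
    apply intervalIntegral.integral_congr
    intro x _
    have hsum : (∫ y in x..1, bsel f false y * ∫ z in y..1, f z)
        + (∫ y in x..1, bsel f true y * ∫ z in y..1, f z) = Pf f x := by
      rw [← intervalIntegral.integral_add
        (show IntervalIntegrable (fun y => bsel f false y * ∫ z in y..1, f z) volume x 1 from
          (bsel_II hf h01 false x 1).mul_continuousOn hG.continuousOn)
        (show IntervalIntegrable (fun y => bsel f true y * ∫ z in y..1, f z) volume x 1 from
          (bsel_II hf h01 true x 1).mul_continuousOn hG.continuousOn)]
      apply intervalIntegral.integral_congr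
      intro y _
      show bsel f false y * (∫ z in y..1, f z) + bsel f true y * (∫ z in y..1, f z) = Gf f y
      rw [bsel_true]
      show (1 - f y) * (∫ z in y..1, f z) + f y * (∫ z in y..1, f z) = ∫ z in y..1, f z
      ring
    show bsel f b x * (∫ y in x..1, bsel f false y * ∫ z in y..1, f z)
        + bsel f b x * (∫ y in x..1, bsel f true y * ∫ z in y..1, f z)
        = bsel f b x * Pf f x
    rw [← mul_add, hsum]
  -- e4
  have e4 : wordDensity ![false, false, true] f + wordDensity ![false, true, true] f
      + wordDensity ![true, false, true] f + wordDensity ![true, true, true] f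
      = 6 * ∫ x in (0:ℝ)..1, Pf f x := by
    have h5 := e3 false
    have h6 := e3 true
    have hcomb : (∫ x in (0:ℝ)..1, bsel f false x * Pf f x)
        + (∫ x in (0:ℝ)..1, bsel f true x * Pf f x) = ∫ x in (0:ℝ)..1, Pf f x := by
      rw [← intervalIntegral.integral_add
        ((bsel_II hf h01 false 0 1).mul_continuousOn hP.continuousOn)
        ((bsel_II hf h01 true 0 1).mul_continuousOn hP.continuousOn)]
      apply intervalIntegral.integral_congr
      intro x _
      show bsel f false x * Pf f x + bsel f true x * Pf f x = Pf f x
      rw [bsel_true]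
      show (1 - f x) * Pf f x + f x * Pf f x = Pf f x
      ring
    calc wordDensity ![false, false, true] f + wordDensity ![false, true, true] f
          + wordDensity ![true, false, true] f + wordDensity ![true, true, true] f
        = (wordDensity ![false, false, true] f + wordDensity ![false, true, true] f)
          + (wordDensity ![true, false, true] f + wordDensity ![true, true, true] f) := by ring
      _ = 6 * ((∫ x in (0:ℝ)..1, bsel f false x * Pf f x)
            + (∫ x in (0:ℝ)..1, bsel f true x * Pf f x)) := by rw [h5, h6]; ring
      _ = 6 * ∫ x in (0:ℝ)..1, Pf f x := by rw [hcomb]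
  -- e6
  have e6 : wordDensity ![true, false, true] f + wordDensity ![true, true, true] f
      = 6 * ∫ x in (0:ℝ)..1, f x * Pf f x := by
    have := e3 true
    rwa [bsel_true] at this
  -- s1
  have hQP : ∀ y : ℝ, Qf f y = (∫ x in (0:ℝ)..1, Gf f x) - Pf f y := by
    intro y
    have hadj := intervalIntegral.integral_add_adjacent_intervals (hGII 0 y) (hGII y 1)
    show (∫ t in (0:ℝ)..y, Gf f t) = (∫ x in (0:ℝ)..1, Gf f x) - ∫ t in y..1, Gf f t
    linarith [hadj]
  have hswap1 := swap2 hG.measurable hf hGa (fun x _ => hfa x)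
  have s1 : ∫ x in (0:ℝ)..1, (Gf f x)^2
      = (∫ x in (0:ℝ)..1, f x) * (∫ x in (0:ℝ)..1, Gf f x)
        - ∫ x in (0:ℝ)..1, f x * Pf f x := by
    have l1 : ∫ x in (0:ℝ)..1, (Gf f x)^2
        = ∫ x in (0:ℝ)..1, Gf f x * ∫ y in x..1, f y := by
      apply intervalIntegral.integral_congr
      intro x _
      show (Gf f x)^2 = Gf f x * ∫ y in x..1, f y
      rw [sq]; rfl
    have l2 : (∫ y in (0:ℝ)..1, f y * ∫ x in (0:ℝ)..y, Gf f x)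
        = ∫ y in (0:ℝ)..1, ((∫ x in (0:ℝ)..1, Gf f x) * f y - f y * Pf f y) := by
      apply intervalIntegral.integral_congr
      intro y _
      show f y * Qf f y = (∫ x in (0:ℝ)..1, Gf f x) * f y - f y * Pf f y
      rw [hQP y]; ring
    have l3 : (∫ y in (0:ℝ)..1, ((∫ x in (0:ℝ)..1, Gf f x) * f y - f y * Pf f y))
        = (∫ x in (0:ℝ)..1, Gf f x) * (∫ x in (0:ℝ)..1, f x)
          - ∫ x in (0:ℝ)..1, f x * Pf f x := by
      rw [intervalIntegral.integral_sub ((hfII 0 1).const_mul _)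
        ((hfII 0 1).mul_continuousOn hP.continuousOn),
        intervalIntegral.integral_const_mul]
    rw [l1, hswap1, l2, l3]
    ring
  -- s2
  have hone : Measurable fun _ : ℝ => (1:ℝ) := measurable_const
  have hswap2 := swap2 hone hG.measurable
    (fun x _ => by norm_num) hGa
  have s2a : (∫ x in (0:ℝ)..1, Pf f x) = ∫ y in (0:ℝ)..1, y * Gf f y := by
    calc (∫ x in (0:ℝ)..1, Pf f x)
        = ∫ x in (0:ℝ)..1, (1:ℝ) * ∫ y in x..1, Gf f y := by
          apply intervalIntegral.integral_congr
          intro x _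
          show Pf f x = 1 * ∫ y in x..1, Gf f y
          rw [one_mul]; rfl
      _ = ∫ y in (0:ℝ)..1, Gf f y * ∫ x in (0:ℝ)..y, (1:ℝ) := hswap2
      _ = ∫ y in (0:ℝ)..1, y * Gf f y := by
          apply intervalIntegral.integral_congr
          intro y _
          show Gf f y * ∫ x in (0:ℝ)..y, (1:ℝ) = y * Gf f y
          rw [intervalIntegral.integral_const, smul_eq_mul]
          ring
  have s2 : ∫ x in (0:ℝ)..1, (1 - x) * Gf f x
      = (∫ x in (0:ℝ)..1, Gf f x) - ∫ x in (0:ℝ)..1, Pf f x := by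
    rw [s2a]
    rw [← intervalIntegral.integral_sub (hGII 0 1)
      (show IntervalIntegrable (fun x => x * Gf f x) volume 0 1 from
        (continuous_id.mul hG).intervalIntegrable 0 1)]
    apply intervalIntegral.integral_congr
    intro x _
    show (1 - x) * Gf f x = Gf f x - x * Gf f x
    ring
  -- s3
  have s3 : ∫ x in (0:ℝ)..1, (1 - x)^2 = 1/3 := by
    have hcs := intervalIntegral.integral_comp_sub_left (a := (0:ℝ)) (b := 1)
      (fun t : ℝ => t^2) 1
    norm_num at hcs
    simpa using hcs
  -- expand
  have m1 : IntervalIntegrable (fun x => (Gf f x)^2) volume 0 1 :=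
    ((hG.pow 2).intervalIntegrable 0 1)
  have m2 : IntervalIntegrable (fun x => (1 - x) * Gf f x) volume 0 1 :=
    (((continuous_const.sub continuous_id).mul hG).intervalIntegrable 0 1)
  have m3 : IntervalIntegrable (fun x : ℝ => (1 - x)^2) volume 0 1 :=
    (((continuous_const.sub continuous_id).pow 2).intervalIntegrable 0 1)
  have expand : ∫ x in (0:ℝ)..1, (Gf f x - a * (1 - x))^2
      = (∫ x in (0:ℝ)..1, (Gf f x)^2) - 2 * a * (∫ x in (0:ℝ)..1, (1 - x) * Gf f x)
        + a^2 * (∫ x in (0:ℝ)..1, (1 - x)^2) := by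
    calc ∫ x in (0:ℝ)..1, (Gf f x - a * (1 - x))^2
        = ∫ x in (0:ℝ)..1,
            (((Gf f x)^2 - 2 * a * ((1 - x) * Gf f x)) + a^2 * (1 - x)^2) := by
          apply intervalIntegral.integral_congr
          intro x _
          show (Gf f x - a * (1 - x))^2
            = ((Gf f x)^2 - 2 * a * ((1 - x) * Gf f x)) + a^2 * (1 - x)^2
          ring
      _ = (∫ x in (0:ℝ)..1, ((Gf f x)^2 - 2 * a * ((1 - x) * Gf f x)))
            + ∫ x in (0:ℝ)..1, a^2 * (1 - x)^2 := by
          rw [intervalIntegral.integral_add (m1.sub (m2.const_mul (2 * a)))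
            (m3.const_mul (a^2))]
      _ = (∫ x in (0:ℝ)..1, (Gf f x)^2)
            - (∫ x in (0:ℝ)..1, 2 * a * ((1 - x) * Gf f x))
            + ∫ x in (0:ℝ)..1, a^2 * (1 - x)^2 := by
          rw [intervalIntegral.integral_sub m1 (m2.const_mul (2 * a))]
      _ = (∫ x in (0:ℝ)..1, (Gf f x)^2) - 2 * a * (∫ x in (0:ℝ)..1, (1 - x) * Gf f x)
            + a^2 * (∫ x in (0:ℝ)..1, (1 - x)^2) := by
          rw [intervalIntegral.integral_const_mul, intervalIntegral.integral_const_mul]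
  rw [expand, s1, s2, s3, word1, e2, e4, e6]
  ring

end ForcibleAux
open ForcibleAux in
/-- Constant functions are finitely forcible by words of length at most three. -/
theorem stmt13 (a : ℝ) (ha : a ∈ Set.Icc (0:ℝ) 1) (h : ℝ → ℝ) (hm : Measurable h)
    (hr : ∀ x ∈ Set.Icc (0:ℝ) 1, h x ∈ Set.Icc (0:ℝ) 1)
    (hyp : ∀ ℓ : ℕ, ℓ ≤ 3 → ∀ u : Fin ℓ → Bool,
      wordDensity u h = wordDensity u (fun _ => a)) :
    ∀ᵐ x ∂(volume.restrict (Set.Icc (0:ℝ) 1)), h x = a := by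
  classical
  set f : ℝ → ℝ := fun x => if x ∈ Set.Icc (0:ℝ) 1 then h x else a with hfdef
  have hfm : Measurable f := Measurable.ite measurableSet_Icc hm measurable_const
  have hf01 : ∀ x, f x ∈ Set.Icc (0:ℝ) 1 := by
    intro x
    by_cases hx : x ∈ Set.Icc (0:ℝ) 1
    · show (if x ∈ Set.Icc (0:ℝ) 1 then h x else a) ∈ Set.Icc (0:ℝ) 1
      rw [if_pos hx]; exact hr x hx
    · show (if x ∈ Set.Icc (0:ℝ) 1 then h x else a) ∈ Set.Icc (0:ℝ) 1
      rw [if_neg hx]; exact ha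
  have hfa : ∀ x : ℝ, |f x| ≤ 1 := fun x => abs_le_one_of_mem (hf01 x)
  have hfII : ∀ u v : ℝ, IntervalIntegrable f volume u v := II hfm hfa
  have hG : Continuous (Gf f) := Gf_cont hfm hf01
  have hwds : ∀ {ℓ : ℕ}, ℓ ≤ 3 → ∀ u : Fin ℓ → Bool,
      wordDensity u f = wordDensity u (fun _ => a) := by
    intro ℓ hℓ u
    refine (wordDensity_congr u ?_).trans (hyp ℓ hℓ u)
    intro x hx
    show (if x ∈ Set.Icc (0:ℝ) 1 then h x else a) = h x
    exact if_pos hx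
  -- the key vanishing integral
  have hΦ0 : ∫ x in (0:ℝ)..1, (Gf f x - a * (1 - x))^2 = 0 := by
    have hmf := master hfm hf01 a
    have hmc := master (f := fun _ => a) measurable_const (fun _ => ha) a
    have hΦc : ∫ x in (0:ℝ)..1, (Gf (fun _ => a) x - a * (1 - x))^2 = 0 := by
      have hzero : Set.EqOn (fun x => (Gf (fun _ => a) x - a * (1 - x))^2)
          (fun _ => (0:ℝ)) (Set.uIcc 0 1) := by
        intro x _
        show (Gf (fun _ => a) x - a * (1 - x))^2 = 0
        have hg : Gf (fun _ => a) x = a * (1 - x) := by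
          show (∫ _ in x..1, a) = a * (1 - x)
          rw [intervalIntegral.integral_const, smul_eq_mul]
          ring
        rw [hg]; ring
      rw [intervalIntegral.integral_congr hzero, intervalIntegral.integral_zero]
    rw [hmf, hwds (by norm_num) ![true], hwds (by norm_num) ![false, true],
      hwds (by norm_num) ![true, true], hwds (by norm_num) ![true, false, true],
      hwds (by norm_num) ![true, true, true], hwds (by norm_num) ![false, false, true],
      hwds (by norm_num) ![false, true, true], ← hmc, hΦc]
  -- pointwise vanishing on [0,1]
  have contψ : Continuous fun x => (Gf f x - a * (1 - x))^2 :=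
    (hG.sub (continuous_const.mul (continuous_const.sub continuous_id))).pow 2
  have hGpt : ∀ x ∈ Set.Icc (0:ℝ) 1, Gf f x = a * (1 - x) := by
    intro x hx
    by_contra hne
    have hpos : 0 < (Gf f x - a * (1 - x))^2 := by
      have : Gf f x - a * (1 - x) ≠ 0 := sub_ne_zero.2 hne
      positivity
    obtain ⟨δ, δpos, hδ⟩ : ∃ δ > 0, ∀ y : ℝ, |y - x| < δ →
        (Gf f x - a * (1 - x))^2 / 2 < (Gf f y - a * (1 - y))^2 := by
      have hc := Metric.continuousAt_iff.1 (contψ.continuousAt (x := x))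
      obtain ⟨δ, δpos, hδ⟩ := hc _ (half_pos hpos)
      refine ⟨δ, δpos, fun y hy => ?_⟩
      have h2 := hδ (show dist y x < δ by simpa [Real.dist_eq] using hy)
      rw [Real.dist_eq] at h2
      have habs := abs_lt.1 h2
      linarith [habs.1]
    set u := max 0 (x - δ/2) with hu
    set v := min 1 (x + δ/2) with hv
    have hu0 : 0 ≤ u := le_max_left _ _
    have hv1 : v ≤ 1 := min_le_left _ _
    have huv : u < v := by
      apply max_lt
      · exact lt_min zero_lt_one (by linarith [hx.1])
      · exact lt_min (by linarith [hx.2]) (by linarith)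
    have hmid : ∀ y ∈ Set.Ioo u v, 0 < (Gf f y - a * (1 - y))^2 := by
      intro y hy
      have h1 : x - δ/2 ≤ u := le_max_right _ _
      have h2 : v ≤ x + δ/2 := min_le_right _ _
      have : |y - x| < δ := abs_lt.2 ⟨by linarith [hy.1], by linarith [hy.2]⟩
      linarith [hδ y this, hpos]
    have hmidpos : 0 < ∫ y in u..v, (Gf f y - a * (1 - y))^2 :=
      intervalIntegral.intervalIntegral_pos_of_pos_on
        (contψ.intervalIntegrable u v) hmid huv
    have hleft : 0 ≤ ∫ y in (0:ℝ)..u, (Gf f y - a * (1 - y))^2 :=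
      intervalIntegral.integral_nonneg hu0 (fun y _ => sq_nonneg _)
    have hright : 0 ≤ ∫ y in v..1, (Gf f y - a * (1 - y))^2 :=
      intervalIntegral.integral_nonneg hv1 (fun y _ => sq_nonneg _)
    have hadj1 := intervalIntegral.integral_add_adjacent_intervals (μ := volume)
      (contψ.intervalIntegrable 0 u) (contψ.intervalIntegrable u v)
    have hadj2 := intervalIntegral.integral_add_adjacent_intervals (μ := volume)
      (contψ.intervalIntegrable 0 v) (contψ.intervalIntegrable v 1)
    rw [← hadj1] at hadj2
    rw [← hadj2] at hΦ0
    linarith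
  -- integrals of f over arbitrary intervals
  have hW : ∀ x : ℝ, (∫ t in (0:ℝ)..x, f t) = a * x := by
    intro x
    rcases le_or_gt x 0 with hx | hx
    · have h0ae : ∀ᵐ y : ℝ ∂volume, y ≠ 0 := by
        have : (volume : Measure ℝ) {(0:ℝ)} = 0 := measure_singleton 0
        rw [ae_iff]
        simpa using this
      have hae : f =ᵐ[volume.restrict (Set.Ioc x 0)] fun _ => a := by
        filter_upwards [ae_restrict_mem measurableSet_Ioc, ae_restrict_of_ae h0ae]
          with y hy hy0
        have hnot : y ∉ Set.Icc (0:ℝ) 1 := by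
          intro hmem
          exact hy0 (le_antisymm hy.2 hmem.1)
        show (if y ∈ Set.Icc (0:ℝ) 1 then h y else a) = a
        exact if_neg hnot
      calc (∫ t in (0:ℝ)..x, f t) = -∫ t in x..0, f t := by
            rw [← intervalIntegral.integral_symm]
        _ = -∫ t in Set.Ioc x 0, f t := by rw [intervalIntegral.integral_of_le hx]
        _ = -∫ _ in Set.Ioc x 0, a := by rw [MeasureTheory.integral_congr_ae hae]
        _ = a * x := by
            rw [MeasureTheory.setIntegral_const, measureReal_def, Real.volume_Ioc,
              ENNReal.toReal_ofReal (by linarith), smul_eq_mul]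
            ring
    · rcases le_or_gt x 1 with hx1 | hx1
      · have hadj := intervalIntegral.integral_add_adjacent_intervals (hfII 0 x) (hfII x 1)
        have h0 : Gf f 0 = a * (1 - 0) := hGpt 0 ⟨le_refl 0, zero_le_one⟩
        have hxg : Gf f x = a * (1 - x) := hGpt x ⟨hx.le, hx1⟩
        have hsum : (∫ t in (0:ℝ)..x, f t) + Gf f x = Gf f 0 := hadj
        rw [hxg, h0] at hsum
        linarith
      · have hadj := intervalIntegral.integral_add_adjacent_intervals (hfII 0 1) (hfII 1 x)
        have h0 : Gf f 0 = a * (1 - 0) := hGpt 0 ⟨le_refl 0, zero_le_one⟩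
        have htail : (∫ t in (1:ℝ)..x, f t) = a * (x - 1) := by
          rw [intervalIntegral.integral_of_le hx1.le]
          have hcg : Set.EqOn f (fun _ => a) (Set.Ioc 1 x) := by
            intro y hy
            have hnot : y ∉ Set.Icc (0:ℝ) 1 := fun hmem => absurd hmem.2 (not_le.2 hy.1)
            show (if y ∈ Set.Icc (0:ℝ) 1 then h y else a) = a
            exact if_neg hnot
          rw [MeasureTheory.setIntegral_congr_fun measurableSet_Ioc hcg,
            MeasureTheory.setIntegral_const, measureReal_def, Real.volume_Ioc,
            ENNReal.toReal_ofReal (by linarith), smul_eq_mul]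
          ring
        have hG0 : (∫ t in (0:ℝ)..1, f t) = a := by
          have : Gf f 0 = ∫ t in (0:ℝ)..1, f t := rfl
          rw [← this, h0]; ring
        rw [hG0, htail] at hadj
        rw [← hadj]
        ring
  have hint_ab : ∀ u v : ℝ, (∫ t in u..v, f t) = a * (v - u) := by
    intro u v
    have := intervalIntegral.integral_interval_sub_left (hfII 0 v) (hfII 0 u)
    rw [hW u, hW v] at this
    rw [← this]
    ring
  -- Lebesgue differentiation
  have hloc : MeasureTheory.LocallyIntegrable f volume := by
    intro x
    refine ⟨Metric.ball x 1, Metric.ball_mem_nhds x one_pos, ?_⟩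
    refine Measure.integrableOn_of_bounded
      (ne_of_lt (measure_ball_lt_top : (volume : Measure ℝ) (Metric.ball x 1) < ⊤))
      hfm.aestronglyMeasurable (M := 1) (ae_of_all _ fun y => ?_)
    simpa using hfa y
  have hdiff := IsUnifLocDoublingMeasure.ae_tendsto_average (volume : Measure ℝ) hloc 1
  have hae : ∀ᵐ x ∂(volume : Measure ℝ), f x = a := by
    filter_upwards [hdiff] with x hx
    have hev : ∀ᶠ j : ℝ in nhdsWithin 0 (Set.Ioi 0),
        x ∈ Metric.closedBall ((fun _ : ℝ => x) j) (1 * (id j)) := by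
      filter_upwards [self_mem_nhdsWithin] with j hj
      have : (0:ℝ) < j := hj
      exact Metric.mem_closedBall_self (by simpa using this.le)
    have htd := hx (fun _ : ℝ => x) id Filter.tendsto_id hev
    have hconst : ∀ᶠ j : ℝ in nhdsWithin 0 (Set.Ioi 0),
        (⨍ y in Metric.closedBall x (id j), f y) = a := by
      filter_upwards [self_mem_nhdsWithin] with j hj
      have hj0 : (0:ℝ) < j := hj
      simp only [id_eq]
      rw [MeasureTheory.setAverage_eq, measureReal_def, Real.volume_closedBall, Real.closedBall_eq_Icc,
        MeasureTheory.integral_Icc_eq_integral_Ioc,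
        ← intervalIntegral.integral_of_le (by linarith : x - j ≤ x + j),
        hint_ab (x - j) (x + j), ENNReal.toReal_ofReal (by linarith), smul_eq_mul]
      have h2j : (2 * j) ≠ 0 := by linarith
      rw [show x + j - (x - j) = 2 * j by ring, mul_comm a, ← mul_assoc,
        inv_mul_cancel₀ h2j, one_mul]
    have h2 : Filter.Tendsto (fun j : ℝ => ⨍ y in Metric.closedBall ((fun _ : ℝ => x) j) (id j), f y)
        (nhdsWithin 0 (Set.Ioi 0)) (nhds a) :=
      Filter.Tendsto.congr' (hconst.mono fun j hj => hj.symm) tendsto_const_nhds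
    exact tendsto_nhds_unique htd h2
  have hres : ∀ᵐ x ∂(volume.restrict (Set.Icc (0:ℝ) 1)), f x = a :=
    MeasureTheory.ae_restrict_of_ae hae
  filter_upwards [hres, MeasureTheory.ae_restrict_mem measurableSet_Icc] with x hfx hx
  rw [← hfx]
  exact (if_pos hx).symm
end

section
/- Let μ, ν be permutons (Borel probability measures on [0,1]² with uniform marginals) and τ a permutation of order k. Then |t(τ,μ) − t(τ,ν)| ≤ k² d_□(μ,ν). -/
open MeasureTheory

/-- A permuton: a Borel measure on `ℝ²` supported on `[0,1]²` with uniform marginals. -/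
def IsPermuton (μ : Measure (ℝ × ℝ)) : Prop :=
  μ.map Prod.fst = volume.restrict (Set.Icc (0:ℝ) 1) ∧
  μ.map Prod.snd = volume.restrict (Set.Icc (0:ℝ) 1)

/-- The density `t(τ,μ)` of a pattern `τ ∈ 𝔖_k` in a permuton `μ`. -/
noncomputable def permDensity {k : ℕ} (τ : Equiv.Perm (Fin k)) (μ : Measure (ℝ × ℝ)) : ℝ :=
  (Nat.factorial k : ℝ) *
    ((Measure.pi fun _ : Fin k => μ)
      {x | (∀ i j : Fin k, i < j → (x i).1 < (x j).1) ∧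
           (∀ i j : Fin k, i < j → (x (τ⁻¹ i)).2 < (x (τ⁻¹ j)).2)}).toReal

/-- The rectangle (cut) distance between permutons. -/
noncomputable def permCutDist (μ ν : Measure (ℝ × ℝ)) : ℝ :=
  sSup {y | ∃ a b c d : ℝ, a ∈ Set.Icc (0:ℝ) 1 ∧ b ∈ Set.Icc (0:ℝ) 1 ∧
    c ∈ Set.Icc (0:ℝ) 1 ∧ d ∈ Set.Icc (0:ℝ) 1 ∧
    y = |(μ (Set.Icc a b ×ˢ Set.Icc c d)).toReal - (ν (Set.Icc a b ×ˢ Set.Icc c d)).toReal|}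

open Set
open scoped ENNReal

variable {μ ν : Measure (ℝ × ℝ)}

lemma IsPermuton.prob (h : IsPermuton μ) : IsProbabilityMeasure μ := by
  constructor
  have := congrArg (fun m => m Set.univ) h.1
  simp only [Measure.map_apply measurable_fst MeasurableSet.univ, Set.preimage_univ,
    Measure.restrict_apply MeasurableSet.univ, Set.univ_inter, Real.volume_Icc] at this
  rw [this]; norm_num

lemma IsPermuton.fst_apply (h : IsPermuton μ) {s : Set ℝ} (hs : MeasurableSet s) :
    μ {p : ℝ × ℝ | p.1 ∈ s} = volume.restrict (Set.Icc (0:ℝ) 1) s := by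
  rw [← h.1, Measure.map_apply measurable_fst hs]; rfl

lemma IsPermuton.snd_apply (h : IsPermuton μ) {s : Set ℝ} (hs : MeasurableSet s) :
    μ {p : ℝ × ℝ | p.2 ∈ s} = volume.restrict (Set.Icc (0:ℝ) 1) s := by
  rw [← h.2, Measure.map_apply measurable_snd hs]; rfl

lemma IsPermuton.fst_line (h : IsPermuton μ) (a : ℝ) : μ {p : ℝ × ℝ | p.1 = a} = 0 := by
  have := h.fst_apply (s := {a}) (measurableSet_singleton a)
  simpa using this

lemma IsPermuton.snd_line (h : IsPermuton μ) (a : ℝ) : μ {p : ℝ × ℝ | p.2 = a} = 0 := by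
  have := h.snd_apply (s := {a}) (measurableSet_singleton a)
  simpa using this

lemma IsPermuton.fst_out (h : IsPermuton μ) : μ {p : ℝ × ℝ | p.1 ∈ (Set.Icc (0:ℝ) 1)ᶜ} = 0 := by
  rw [h.fst_apply measurableSet_Icc.compl, Measure.restrict_apply measurableSet_Icc.compl]
  simp

lemma IsPermuton.snd_out (h : IsPermuton μ) : μ {p : ℝ × ℝ | p.2 ∈ (Set.Icc (0:ℝ) 1)ᶜ} = 0 := by
  rw [h.snd_apply measurableSet_Icc.compl, Measure.restrict_apply measurableSet_Icc.compl]
  simp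

lemma IsPermuton.compl_box (h : IsPermuton μ) :
    μ (Set.Icc (0:ℝ) 1 ×ˢ Set.Icc (0:ℝ) 1)ᶜ = 0 := by
  refine measure_mono_null ?_ (measure_union_null h.fst_out h.snd_out)
  intro p hp
  simp only [Set.mem_compl_iff, Set.mem_prod, not_and_or] at hp
  rcases hp with hp | hp
  · exact Or.inl hp
  · exact Or.inr hp


lemma cutSet_bdd (hμ : IsPermuton μ) (hν : IsPermuton ν) :
    BddAbove {y | ∃ a b c d : ℝ, a ∈ Set.Icc (0:ℝ) 1 ∧ b ∈ Set.Icc (0:ℝ) 1 ∧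
    c ∈ Set.Icc (0:ℝ) 1 ∧ d ∈ Set.Icc (0:ℝ) 1 ∧
    y = |(μ (Set.Icc a b ×ˢ Set.Icc c d)).toReal - (ν (Set.Icc a b ×ˢ Set.Icc c d)).toReal|} := by
  haveI := hμ.prob; haveI := hν.prob
  refine ⟨1, ?_⟩
  rintro y ⟨a, b, c, d, _, _, _, _, rfl⟩
  have h1 : (μ (Set.Icc a b ×ˢ Set.Icc c d)).toReal ≤ 1 := by
    refine ENNReal.toReal_le_of_le_ofReal zero_le_one ?_
    rw [ENNReal.ofReal_one, ← measure_univ (μ := μ)]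
    exact measure_mono (Set.subset_univ _)
  have h2 : (ν (Set.Icc a b ×ˢ Set.Icc c d)).toReal ≤ 1 := by
    refine ENNReal.toReal_le_of_le_ofReal zero_le_one ?_
    rw [ENNReal.ofReal_one, ← measure_univ (μ := ν)]
    exact measure_mono (Set.subset_univ _)
  have := ENNReal.toReal_nonneg (a := μ (Set.Icc a b ×ˢ Set.Icc c d))
  have := ENNReal.toReal_nonneg (a := ν (Set.Icc a b ×ˢ Set.Icc c d))
  rw [abs_sub_le_iff]; constructor <;> linarith

lemma permCutDist_nonneg (hμ : IsPermuton μ) (hν : IsPermuton ν) :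
    0 ≤ permCutDist μ ν := by
  have h0 : (0:ℝ) ∈ {y | ∃ a b c d : ℝ, a ∈ Set.Icc (0:ℝ) 1 ∧ b ∈ Set.Icc (0:ℝ) 1 ∧
      c ∈ Set.Icc (0:ℝ) 1 ∧ d ∈ Set.Icc (0:ℝ) 1 ∧
      y = |(μ (Set.Icc a b ×ˢ Set.Icc c d)).toReal - (ν (Set.Icc a b ×ˢ Set.Icc c d)).toReal|} := by
    refine ⟨0, 0, 0, 0, by norm_num, by norm_num, by norm_num, by norm_num, ?_⟩
    have hμ0 : μ (Set.Icc (0:ℝ) 0 ×ˢ Set.Icc (0:ℝ) 0) = 0 := by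
      refine measure_mono_null ?_ (hμ.fst_line 0)
      rintro ⟨x, y⟩ ⟨hx, _⟩; simpa using hx
    have hν0 : ν (Set.Icc (0:ℝ) 0 ×ˢ Set.Icc (0:ℝ) 0) = 0 := by
      refine measure_mono_null ?_ (hν.fst_line 0)
      rintro ⟨x, y⟩ ⟨hx, _⟩; simpa using hx
    rw [hμ0, hν0]; simp
  exact le_csSup (cutSet_bdd hμ hν) h0

lemma permuton_ordConnected_prod_eq (hμ : IsPermuton μ) {S T : Set ℝ}
    (hS : S.OrdConnected) (hT : T.OrdConnected) (hSne : (S ∩ Set.Icc (0:ℝ) 1).Nonempty)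
    (hTne : (T ∩ Set.Icc (0:ℝ) 1).Nonempty) :
    μ (S ×ˢ T) = μ (Set.Icc (sInf (S ∩ Set.Icc (0:ℝ) 1)) (sSup (S ∩ Set.Icc (0:ℝ) 1)) ×ˢ
      Set.Icc (sInf (T ∩ Set.Icc (0:ℝ) 1)) (sSup (T ∩ Set.Icc (0:ℝ) 1))) := by
  set S' := S ∩ Set.Icc (0:ℝ) 1 with hS'
  set T' := T ∩ Set.Icc (0:ℝ) 1 with hT'
  have hS'o : S'.OrdConnected := hS.inter Set.ordConnected_Icc
  have hT'o : T'.OrdConnected := hT.inter Set.ordConnected_Icc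
  have hSbb : BddBelow S' := BddBelow.mono Set.inter_subset_right (bddBelow_Icc)
  have hSba : BddAbove S' := BddAbove.mono Set.inter_subset_right (bddAbove_Icc)
  have hTbb : BddBelow T' := BddBelow.mono Set.inter_subset_right (bddBelow_Icc)
  have hTba : BddAbove T' := BddAbove.mono Set.inter_subset_right (bddAbove_Icc)
  have step1 : μ (S ×ˢ T) = μ (S' ×ˢ T') := by
    rw [← measure_inter_conull hμ.compl_box (s := S ×ˢ T), Set.prod_inter_prod]
  have hsub1 : S' ⊆ Set.Icc (sInf S') (sSup S') := fun x hx =>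
    ⟨csInf_le hSbb hx, le_csSup hSba hx⟩
  have hsub2 : T' ⊆ Set.Icc (sInf T') (sSup T') := fun x hx =>
    ⟨csInf_le hTbb hx, le_csSup hTba hx⟩
  have hIooS : Set.Ioo (sInf S') (sSup S') ⊆ S' := fun x hx => by
    obtain ⟨u, hu, hux⟩ := (csInf_lt_iff hSbb hSne).1 hx.1
    obtain ⟨v, hv, hxv⟩ := (lt_csSup_iff hSba hSne).1 hx.2
    exact hS'o.out hu hv ⟨hux.le, hxv.le⟩
  have hIooT : Set.Ioo (sInf T') (sSup T') ⊆ T' := fun x hx => by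
    obtain ⟨u, hu, hux⟩ := (csInf_lt_iff hTbb hTne).1 hx.1
    obtain ⟨v, hv, hxv⟩ := (lt_csSup_iff hTba hTne).1 hx.2
    exact hT'o.out hu hv ⟨hux.le, hxv.le⟩
  rw [step1]
  apply le_antisymm
  · exact measure_mono (Set.prod_mono hsub1 hsub2)
  · have : Set.Icc (sInf S') (sSup S') ×ˢ Set.Icc (sInf T') (sSup T') ⊆
        (S' ×ˢ T') ∪ ({p : ℝ × ℝ | p.1 = sInf S'} ∪ {p : ℝ × ℝ | p.1 = sSup S'} ∪
          ({p : ℝ × ℝ | p.2 = sInf T'} ∪ {p : ℝ × ℝ | p.2 = sSup T'})) := by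
      rintro ⟨x, y⟩ ⟨hx, hy⟩
      by_cases h1 : x = sInf S'
      · exact Or.inr (Or.inl (Or.inl h1))
      by_cases h2 : x = sSup S'
      · exact Or.inr (Or.inl (Or.inr h2))
      by_cases h3 : y = sInf T'
      · exact Or.inr (Or.inr (Or.inl h3))
      by_cases h4 : y = sSup T'
      · exact Or.inr (Or.inr (Or.inr h4))
      refine Or.inl ⟨hIooS ⟨lt_of_le_of_ne hx.1 (Ne.symm h1), lt_of_le_of_ne hx.2 h2⟩,
        hIooT ⟨lt_of_le_of_ne hy.1 (Ne.symm h3), lt_of_le_of_ne hy.2 h4⟩⟩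
    calc μ (Set.Icc (sInf S') (sSup S') ×ˢ Set.Icc (sInf T') (sSup T'))
        ≤ μ ((S' ×ˢ T') ∪ _) := measure_mono this
      _ ≤ μ (S' ×ˢ T') + μ _ := measure_union_le _ _
      _ = μ (S' ×ˢ T') := by
          have hnull : μ ({p : ℝ × ℝ | p.1 = sInf S'} ∪ {p : ℝ × ℝ | p.1 = sSup S'} ∪
              ({p : ℝ × ℝ | p.2 = sInf T'} ∪ {p : ℝ × ℝ | p.2 = sSup T'})) = 0 :=
            measure_union_null (measure_union_null (hμ.fst_line _) (hμ.fst_line _))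
              (measure_union_null (hμ.snd_line _) (hμ.snd_line _))
          rw [hnull, add_zero]

lemma rect_bound (hμ : IsPermuton μ) (hν : IsPermuton ν) {S T : Set ℝ}
    (hS : S.OrdConnected) (hT : T.OrdConnected) :
    |(μ (S ×ˢ T)).toReal - (ν (S ×ˢ T)).toReal| ≤ permCutDist μ ν := by
  by_cases hSne : (S ∩ Set.Icc (0:ℝ) 1).Nonempty
  · by_cases hTne : (T ∩ Set.Icc (0:ℝ) 1).Nonempty
    · set a := sInf (S ∩ Set.Icc (0:ℝ) 1)
      set b := sSup (S ∩ Set.Icc (0:ℝ) 1)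
      set c := sInf (T ∩ Set.Icc (0:ℝ) 1)
      set d := sSup (T ∩ Set.Icc (0:ℝ) 1)
      rw [permuton_ordConnected_prod_eq hμ hS hT hSne hTne,
        permuton_ordConnected_prod_eq hν hS hT hSne hTne]
      obtain ⟨x, hxS, hx0, hx1⟩ := hSne
      obtain ⟨y, hyT, hy0, hy1⟩ := hTne
      have hbbS : BddBelow (S ∩ Set.Icc (0:ℝ) 1) :=
        BddBelow.mono Set.inter_subset_right (bddBelow_Icc)
      have hbaS : BddAbove (S ∩ Set.Icc (0:ℝ) 1) :=
        BddAbove.mono Set.inter_subset_right (bddAbove_Icc)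
      have hbbT : BddBelow (T ∩ Set.Icc (0:ℝ) 1) :=
        BddBelow.mono Set.inter_subset_right (bddBelow_Icc)
      have hbaT : BddAbove (T ∩ Set.Icc (0:ℝ) 1) :=
        BddAbove.mono Set.inter_subset_right (bddAbove_Icc)
      have ha : a ∈ Set.Icc (0:ℝ) 1 :=
        ⟨le_csInf ⟨x, hxS, hx0, hx1⟩ (fun z hz => hz.2.1),
         le_trans (csInf_le hbbS ⟨hxS, hx0, hx1⟩) hx1⟩
      have hb : b ∈ Set.Icc (0:ℝ) 1 :=
        ⟨le_trans hx0 (le_csSup hbaS ⟨hxS, hx0, hx1⟩),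
         csSup_le ⟨x, hxS, hx0, hx1⟩ (fun z hz => hz.2.2)⟩
      have hc : c ∈ Set.Icc (0:ℝ) 1 :=
        ⟨le_csInf ⟨y, hyT, hy0, hy1⟩ (fun z hz => hz.2.1),
         le_trans (csInf_le hbbT ⟨hyT, hy0, hy1⟩) hy1⟩
      have hd : d ∈ Set.Icc (0:ℝ) 1 :=
        ⟨le_trans hy0 (le_csSup hbaT ⟨hyT, hy0, hy1⟩),
         csSup_le ⟨y, hyT, hy0, hy1⟩ (fun z hz => hz.2.2)⟩
      exact le_csSup (cutSet_bdd hμ hν) ⟨a, b, c, d, ha, hb, hc, hd, rfl⟩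
    · have hsub : S ×ˢ T ⊆ {p : ℝ × ℝ | p.2 ∈ (Set.Icc (0:ℝ) 1)ᶜ} := by
        rintro ⟨x, y⟩ ⟨_, hy⟩ hy'
        exact hTne ⟨y, hy, hy'⟩
      rw [measure_mono_null hsub hμ.snd_out, measure_mono_null hsub hν.snd_out]
      simpa using permCutDist_nonneg hμ hν
  · have hsub : S ×ˢ T ⊆ {p : ℝ × ℝ | p.1 ∈ (Set.Icc (0:ℝ) 1)ᶜ} := by
      rintro ⟨x, y⟩ ⟨hx, _⟩ hx'
      exact hSne ⟨x, hx, hx'⟩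
    rw [measure_mono_null hsub hμ.fst_out, measure_mono_null hsub hν.fst_out]
    simpa using permCutDist_nonneg hμ hν

lemma sortedSet_measurable {n : ℕ} :
    MeasurableSet {x : Fin n → ℝ | ∀ l m : Fin n, l < m → x l < x m} := by
  have : {x : Fin n → ℝ | ∀ l m : Fin n, l < m → x l < x m} =
      ⋂ l, ⋂ m, {x : Fin n → ℝ | l < m → x l < x m} := by
    ext x; simp [Set.mem_iInter]
  rw [this]
  refine MeasurableSet.iInter fun l => MeasurableSet.iInter fun m => ?_
  by_cases h : l < m
  · simp only [h, forall_true_left]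
    exact measurableSet_lt (measurable_pi_apply l) (measurable_pi_apply m)
  · simp only [h]
    simp only [false_implies]
    exact MeasurableSet.univ

lemma uniform_sorted_le {n : ℕ} :
    (Measure.pi fun _ : Fin n => volume.restrict (Set.Icc (0:ℝ) 1))
      {x : Fin n → ℝ | ∀ l m : Fin n, l < m → x l < x m} ≤ ((n.factorial : ℝ≥0∞))⁻¹ := by
  set u : Measure ℝ := volume.restrict (Set.Icc (0:ℝ) 1) with hu
  haveI : IsProbabilityMeasure u := by
    constructor; rw [hu, Measure.restrict_apply MeasurableSet.univ, Set.univ_inter,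
      Real.volume_Icc]; norm_num
  set m : Measure (Fin n → ℝ) := Measure.pi fun _ : Fin n => u with hm
  haveI : IsProbabilityMeasure m := by
    constructor
    rw [hm, ← Set.pi_univ Set.univ, Measure.pi_pi]
    simp
  set Srt : Set (Fin n → ℝ) := {x | ∀ l m : Fin n, l < m → x l < x m} with hSrt
  set A : Equiv.Perm (Fin n) → Set (Fin n → ℝ) :=
    fun σ => {x | ∀ l m : Fin n, l < m → x (σ l) < x (σ m)} with hA
  -- each A σ has the same measure as Srt
  have hmeas : ∀ σ : Equiv.Perm (Fin n), m (A σ) = m Srt := by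
    intro σ
    have hmp := measurePreserving_piCongrLeft (fun _ : Fin n => u) (σ⁻¹ : Equiv.Perm (Fin n))
    have happ : ∀ (x : Fin n → ℝ) (i : Fin n),
        (MeasurableEquiv.piCongrLeft (fun _ : Fin n => ℝ) (σ⁻¹ : Equiv.Perm (Fin n))) x i
          = x (σ i) := by
      intro x i
      have := Equiv.piCongrLeft_apply_apply (P := fun _ : Fin n => ℝ)
        (e := (σ⁻¹ : Equiv.Perm (Fin n))) x (σ i)
      simpa [MeasurableEquiv.piCongrLeft] using this
    have hpre : (MeasurableEquiv.piCongrLeft (fun _ : Fin n => ℝ)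
        (σ⁻¹ : Equiv.Perm (Fin n))) ⁻¹' Srt = A σ := by
      ext x
      simp only [Set.mem_preimage, hSrt, Set.mem_setOf_eq, hA, happ]
    calc m (A σ) = m _ := (congrArg m hpre).symm
      _ = m Srt := hmp.measure_preimage sortedSet_measurable.nullMeasurableSet
  -- the A σ are pairwise disjoint
  have hdisj : Pairwise (Function.onFun Disjoint A) := by
    intro σ σ' hne
    rw [Function.onFun, Set.disjoint_left]
    intro x hxσ hxσ'
    apply hne
    have h1 : StrictMono (fun l => x (σ l)) := fun l m h => hxσ l m h
    have h2 : StrictMono (fun l => x (σ' l)) := fun l m h => hxσ' l m h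
    have hρ : StrictMono (⇑(σ'⁻¹ * σ) : Fin n → Fin n) := by
      intro l l' hll
      have : (fun l => x (σ' l)) ((σ'⁻¹ * σ) l) < (fun l => x (σ' l)) ((σ'⁻¹ * σ) l') := by
        simpa using h1 hll
      exact h2.lt_iff_lt.1 this
    have hid : (⇑(σ'⁻¹ * σ) : Fin n → Fin n) = id := by
      haveI : WellFoundedLT (Fin n) := Finite.to_wellFoundedLT
      refine (hρ.range_inj strictMono_id).1 ?_
      rw [Set.range_id]
      exact Set.range_eq_univ.2 (σ'⁻¹ * σ).surjective
    ext i
    have := congrFun hid i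
    simp only [Equiv.Perm.mul_apply, id_eq] at this
    have h3 : σ' ((σ'⁻¹) (σ i)) = σ' i := congrArg σ' this
    simp only [Equiv.Perm.inv_def, Equiv.apply_symm_apply] at h3
    exact congrArg Fin.val h3
  -- summing up
  have hAmeas : ∀ σ : Equiv.Perm (Fin n), MeasurableSet (A σ) := by
    intro σ
    have : A σ = (fun x : Fin n → ℝ => fun l => x (σ l)) ⁻¹' Srt := by
      ext x; simp [hA, hSrt]
    rw [this]
    exact sortedSet_measurable.preimage (measurable_pi_iff.2 fun l => measurable_pi_apply _)
  have hsum : ∑' σ : Equiv.Perm (Fin n), m (A σ) = m (⋃ σ, A σ) :=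
    (measure_iUnion hdisj hAmeas).symm
  have hle1 : m (⋃ σ, A σ) ≤ 1 := by
    rw [← measure_univ (μ := m)]; exact measure_mono (Set.subset_univ _)
  rw [tsum_fintype] at hsum
  simp only [hmeas, Finset.sum_const, Finset.card_univ] at hsum
  have hcard : Fintype.card (Equiv.Perm (Fin n)) = n.factorial := by
    rw [Fintype.card_perm, Fintype.card_fin]
  rw [hcard] at hsum
  have : (n.factorial : ℝ≥0∞) * m Srt ≤ 1 := by
    rw [← nsmul_eq_mul, hsum]; exact hle1
  rw [ENNReal.le_inv_iff_mul_le, mul_comm]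
  exact this

lemma permuton_pi_sorted_le {n : ℕ} (P : Fin n → Measure (ℝ × ℝ))
    (hP : ∀ i, IsPermuton (P i)) :
    (Measure.pi P) {y : Fin n → ℝ × ℝ | ∀ l m : Fin n, l < m → (y l).1 < (y m).1} ≤
      ((n.factorial : ℝ≥0∞))⁻¹ := by
  haveI : ∀ i, IsProbabilityMeasure (P i) := fun i => (hP i).prob
  haveI : IsProbabilityMeasure (volume.restrict (Set.Icc (0:ℝ) 1)) := by
    constructor; rw [Measure.restrict_apply MeasurableSet.univ, Set.univ_inter,
      Real.volume_Icc]; norm_num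
  have mp : MeasurePreserving (fun (y : Fin n → ℝ × ℝ) (l : Fin n) => (y l).1)
      (Measure.pi P) (Measure.pi fun _ : Fin n => volume.restrict (Set.Icc (0:ℝ) 1)) :=
    measurePreserving_pi P (fun _ => volume.restrict (Set.Icc (0:ℝ) 1))
      (fun i => ⟨measurable_fst, (hP i).1⟩)
  have hpre : {y : Fin n → ℝ × ℝ | ∀ l m : Fin n, l < m → (y l).1 < (y m).1} =
      (fun (y : Fin n → ℝ × ℝ) (l : Fin n) => (y l).1) ⁻¹'
        {x : Fin n → ℝ | ∀ l m : Fin n, l < m → x l < x m} := rfl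
  rw [hpre, mp.measure_preimage sortedSet_measurable.nullMeasurableSet]
  exact uniform_sorted_le

def patSet {k : ℕ} (τ : Equiv.Perm (Fin k)) : Set (Fin k → ℝ × ℝ) :=
  {x | (∀ i j : Fin k, i < j → (x i).1 < (x j).1) ∧
       (∀ i j : Fin k, τ i < τ j → (x i).2 < (x j).2)}

def sliceS {n : ℕ} (j₀ : Fin (n+1)) (y : Fin n → ℝ × ℝ) : Set ℝ :=
  {t | ∀ l : Fin n, (j₀.succAbove l < j₀ → (y l).1 < t) ∧ (j₀ < j₀.succAbove l → t < (y l).1)}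

def sliceT {n : ℕ} (τ : Equiv.Perm (Fin (n+1))) (j₀ : Fin (n+1)) (y : Fin n → ℝ × ℝ) :
    Set ℝ :=
  {t | ∀ l : Fin n, (τ (j₀.succAbove l) < τ j₀ → (y l).2 < t) ∧
    (τ j₀ < τ (j₀.succAbove l) → t < (y l).2)}

def qSet {n : ℕ} (τ : Equiv.Perm (Fin (n+1))) (j₀ : Fin (n+1)) : Set (Fin n → ℝ × ℝ) :=
  {y | (∀ l m : Fin n, j₀.succAbove l < j₀.succAbove m → (y l).1 < (y m).1) ∧
       (∀ l m : Fin n, τ (j₀.succAbove l) < τ (j₀.succAbove m) → (y l).2 < (y m).2)}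

lemma sliceS_ordConnected {n : ℕ} (j₀ : Fin (n+1)) (y : Fin n → ℝ × ℝ) :
    (sliceS j₀ y).OrdConnected := by
  refine ⟨fun t1 h1 t2 h2 t ht => fun l => ?_⟩
  exact ⟨fun hl => lt_of_lt_of_le ((h1 l).1 hl) ht.1,
    fun hl => lt_of_le_of_lt ht.2 ((h2 l).2 hl)⟩

lemma sliceT_ordConnected {n : ℕ} (τ : Equiv.Perm (Fin (n+1))) (j₀ : Fin (n+1))
    (y : Fin n → ℝ × ℝ) : (sliceT τ j₀ y).OrdConnected := by
  refine ⟨fun t1 h1 t2 h2 t ht => fun l => ?_⟩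
  exact ⟨fun hl => lt_of_lt_of_le ((h1 l).1 hl) ht.1,
    fun hl => lt_of_le_of_lt ht.2 ((h2 l).2 hl)⟩

lemma insertNth_mem_patSet_iff {n : ℕ} (τ : Equiv.Perm (Fin (n+1))) (j₀ : Fin (n+1))
    (z : ℝ × ℝ) (y : Fin n → ℝ × ℝ) :
    j₀.insertNth z y ∈ patSet τ ↔
      z ∈ sliceS j₀ y ×ˢ sliceT τ j₀ y ∧ y ∈ qSet τ j₀ := by
  constructor
  · rintro ⟨h1, h2⟩
    refine ⟨⟨fun l => ⟨fun hl => ?_, fun hl => ?_⟩, fun l => ⟨fun hl => ?_, fun hl => ?_⟩⟩,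
      fun l m hlm => ?_, fun l m hlm => ?_⟩
    · have := h1 _ _ hl; simpa [Fin.insertNth_apply_same, Fin.insertNth_apply_succAbove] using this
    · have := h1 _ _ hl; simpa [Fin.insertNth_apply_same, Fin.insertNth_apply_succAbove] using this
    · have := h2 _ _ hl; simpa [Fin.insertNth_apply_same, Fin.insertNth_apply_succAbove] using this
    · have := h2 _ _ hl; simpa [Fin.insertNth_apply_same, Fin.insertNth_apply_succAbove] using this
    · have := h1 _ _ hlm; simpa [Fin.insertNth_apply_succAbove] using this
    · have := h2 _ _ hlm; simpa [Fin.insertNth_apply_succAbove] using this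
  · rintro ⟨⟨hzS, hzT⟩, hQ1, hQ2⟩
    constructor
    · intro i i' hii
      by_cases hi : i = j₀
      · by_cases hi' : i' = j₀
        · exact absurd ((hi.trans hi'.symm) ▸ hii) (lt_irrefl _)
        · obtain ⟨m, rfl⟩ := Fin.exists_succAbove_eq hi'
          have := (hzS m).2 (hi ▸ hii)
          rw [hi]
          simpa [Fin.insertNth_apply_same, Fin.insertNth_apply_succAbove] using this
      · obtain ⟨l, rfl⟩ := Fin.exists_succAbove_eq hi
        by_cases hi' : i' = j₀
        · have := (hzS l).1 (hi' ▸ hii)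
          rw [hi']
          simpa [Fin.insertNth_apply_same, Fin.insertNth_apply_succAbove] using this
        · obtain ⟨m, rfl⟩ := Fin.exists_succAbove_eq hi'
          have := hQ1 l m hii
          simpa [Fin.insertNth_apply_succAbove] using this
    · intro i i' hii
      by_cases hi : i = j₀
      · by_cases hi' : i' = j₀
        · exact absurd ((hi.trans hi'.symm) ▸ hii) (lt_irrefl _)
        · obtain ⟨m, rfl⟩ := Fin.exists_succAbove_eq hi'
          have := (hzT m).2 (hi ▸ hii)
          rw [hi]
          simpa [Fin.insertNth_apply_same, Fin.insertNth_apply_succAbove] using this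
      · obtain ⟨l, rfl⟩ := Fin.exists_succAbove_eq hi
        by_cases hi' : i' = j₀
        · have := (hzT l).1 (hi' ▸ hii)
          rw [hi']
          simpa [Fin.insertNth_apply_same, Fin.insertNth_apply_succAbove] using this
        · obtain ⟨m, rfl⟩ := Fin.exists_succAbove_eq hi'
          have := hQ2 l m hii
          simpa [Fin.insertNth_apply_succAbove] using this

lemma relSet_measurable {k : ℕ} (r : Fin k → Fin k → Prop) (f : ℝ × ℝ → ℝ)
    (hf : Measurable f) :
    MeasurableSet {x : Fin k → ℝ × ℝ | ∀ i j : Fin k, r i j → f (x i) < f (x j)} := by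
  have : {x : Fin k → ℝ × ℝ | ∀ i j : Fin k, r i j → f (x i) < f (x j)} =
      ⋂ i, ⋂ j, {x : Fin k → ℝ × ℝ | r i j → f (x i) < f (x j)} := by
    ext x; simp [Set.mem_iInter]
  rw [this]
  refine MeasurableSet.iInter fun i => MeasurableSet.iInter fun j => ?_
  by_cases h : r i j
  · simp only [h, forall_true_left]
    exact measurableSet_lt (hf.comp (measurable_pi_apply i)) (hf.comp (measurable_pi_apply j))
  · simp only [h, false_implies]
    exact MeasurableSet.univ

lemma patSet_measurable {k : ℕ} (τ : Equiv.Perm (Fin k)) : MeasurableSet (patSet τ) :=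
  (relSet_measurable (fun i j => i < j) Prod.fst measurable_fst).inter
    (relSet_measurable (fun i j => τ i < τ j) Prod.snd measurable_snd)

lemma qSet_measurable {n : ℕ} (τ : Equiv.Perm (Fin (n+1))) (j₀ : Fin (n+1)) :
    MeasurableSet (qSet τ j₀) :=
  (relSet_measurable (fun l m => j₀.succAbove l < j₀.succAbove m) Prod.fst
      measurable_fst).inter
    (relSet_measurable (fun l m => τ (j₀.succAbove l) < τ (j₀.succAbove m)) Prod.snd
      measurable_snd)

lemma qSet_subset_sorted {n : ℕ} (τ : Equiv.Perm (Fin (n+1))) (j₀ : Fin (n+1)) :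
    qSet τ j₀ ⊆ {y : Fin n → ℝ × ℝ | ∀ l m : Fin n, l < m → (y l).1 < (y m).1} := by
  intro y hy l m hlm
  exact hy.1 l m (Fin.succAbove_lt_succAbove_iff.2 hlm)

lemma swap_step {n : ℕ} (τ : Equiv.Perm (Fin (n+1))) (j₀ : Fin (n+1))
    (P Q : Fin (n+1) → Measure (ℝ × ℝ)) (hP : ∀ i, IsPermuton (P i))
    (hQ : ∀ i, IsPermuton (Q i)) (hPQ : ∀ i, i ≠ j₀ → P i = Q i) :
    ((Measure.pi P) (patSet τ)).toReal - ((Measure.pi Q) (patSet τ)).toReal ≤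
      permCutDist (P j₀) (Q j₀) * ((n.factorial : ℝ))⁻¹ := by
  classical
  haveI : ∀ i, IsProbabilityMeasure (P i) := fun i => (hP i).prob
  haveI : ∀ i, IsProbabilityMeasure (Q i) := fun i => (hQ i).prob
  set d : ℝ := permCutDist (P j₀) (Q j₀) with hd
  have hd0 : 0 ≤ d := permCutDist_nonneg (hP j₀) (hQ j₀)
  set A : Set (Fin (n+1) → ℝ × ℝ) := patSet τ with hA
  have hAm : MeasurableSet A := patSet_measurable τ
  set e := MeasurableEquiv.piFinSuccAbove (fun _ : Fin (n+1) => ℝ × ℝ) j₀ with he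
  set mRest : Measure (Fin n → ℝ × ℝ) := Measure.pi fun l : Fin n => P (j₀.succAbove l)
    with hmRest
  have hRestEq : (Measure.pi fun l : Fin n => Q (j₀.succAbove l)) = mRest := by
    rw [hmRest]; congr 1; funext l; exact (hPQ _ (Fin.succAbove_ne j₀ l)).symm
  have hsm : MeasurableSet (e.symm ⁻¹' A) := e.symm.measurable hAm
  -- express both measures as integrals over the rest
  have hExpandP : (((P j₀).prod mRest) (e.symm ⁻¹' A)) =
      ∫⁻ y, (P j₀) ((fun z => (z, y)) ⁻¹' (e.symm ⁻¹' A)) ∂mRest :=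
    Measure.prod_apply_symm hsm
  have hExpandQ : (((Q j₀).prod mRest) (e.symm ⁻¹' A)) =
      ∫⁻ y, (Q j₀) ((fun z => (z, y)) ⁻¹' (e.symm ⁻¹' A)) ∂mRest :=
    Measure.prod_apply_symm hsm
  have hP' : (Measure.pi P) A = ((P j₀).prod mRest) (e.symm ⁻¹' A) := by
    have mp := (measurePreserving_piFinSuccAbove P j₀).symm e
    rw [← mp.map_eq, Measure.map_apply e.symm.measurable hAm]
  have hQ' : (Measure.pi Q) A = ((Q j₀).prod mRest) (e.symm ⁻¹' A) := by
    have mp := (measurePreserving_piFinSuccAbove Q j₀).symm e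
    rw [← mp.map_eq, hRestEq, Measure.map_apply e.symm.measurable hAm]
  -- identify slices
  have hslice : ∀ y : Fin n → ℝ × ℝ, (fun z => (z, y)) ⁻¹' (e.symm ⁻¹' A) =
      if y ∈ qSet τ j₀ then sliceS j₀ y ×ˢ sliceT τ j₀ y else (∅ : Set (ℝ × ℝ)) := by
    intro y
    ext z
    have hz : e.symm (z, y) = j₀.insertNth z y := by
      simp [he, MeasurableEquiv.piFinSuccAbove, Fin.insertNthEquiv]
    simp only [Set.mem_preimage, hz, hA]
    rw [insertNth_mem_patSet_iff]
    by_cases hy : y ∈ qSet τ j₀ <;> simp [hy]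
  -- pointwise bound
  have hpt : ∀ y : Fin n → ℝ × ℝ,
      (P j₀) ((fun z => (z, y)) ⁻¹' (e.symm ⁻¹' A)) ≤
        (Q j₀) ((fun z => (z, y)) ⁻¹' (e.symm ⁻¹' A)) +
          (qSet τ j₀).indicator (fun _ => ENNReal.ofReal d) y := by
    intro y
    rw [hslice y]
    by_cases hy : y ∈ qSet τ j₀
    · simp only [hy, if_true, Set.indicator_of_mem]
      have hrb := rect_bound (hP j₀) (hQ j₀) (sliceS_ordConnected j₀ y)
        (sliceT_ordConnected τ j₀ y)
      rw [abs_sub_le_iff] at hrb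
      have h1 : ((P j₀) (sliceS j₀ y ×ˢ sliceT τ j₀ y)).toReal ≤
          ((Q j₀) (sliceS j₀ y ×ˢ sliceT τ j₀ y)).toReal + d := by linarith [hrb.1]
      calc (P j₀) (sliceS j₀ y ×ˢ sliceT τ j₀ y)
          = ENNReal.ofReal (((P j₀) (sliceS j₀ y ×ˢ sliceT τ j₀ y)).toReal) :=
            (ENNReal.ofReal_toReal (measure_ne_top _ _)).symm
        _ ≤ ENNReal.ofReal (((Q j₀) (sliceS j₀ y ×ˢ sliceT τ j₀ y)).toReal + d) :=
            ENNReal.ofReal_le_ofReal h1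
        _ ≤ ENNReal.ofReal (((Q j₀) (sliceS j₀ y ×ˢ sliceT τ j₀ y)).toReal) +
            ENNReal.ofReal d := ENNReal.ofReal_add_le
        _ = (Q j₀) (sliceS j₀ y ×ˢ sliceT τ j₀ y) + ENNReal.ofReal d := by
            rw [ENNReal.ofReal_toReal (measure_ne_top _ _)]
    · simp [hy]
  -- integrate
  have hint : (Measure.pi P) A ≤ (Measure.pi Q) A +
      ENNReal.ofReal d * mRest (qSet τ j₀) := by
    rw [hP', hQ', hExpandP, hExpandQ]
    calc ∫⁻ y, (P j₀) ((fun z => (z, y)) ⁻¹' (e.symm ⁻¹' A)) ∂mRest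
        ≤ ∫⁻ y, ((Q j₀) ((fun z => (z, y)) ⁻¹' (e.symm ⁻¹' A)) +
            (qSet τ j₀).indicator (fun _ => ENNReal.ofReal d) y) ∂mRest :=
          lintegral_mono hpt
      _ = (∫⁻ y, (Q j₀) ((fun z => (z, y)) ⁻¹' (e.symm ⁻¹' A)) ∂mRest) +
          ∫⁻ y, (qSet τ j₀).indicator (fun _ => ENNReal.ofReal d) y ∂mRest :=
          lintegral_add_right _ (measurable_const.indicator (qSet_measurable τ j₀))
      _ = (∫⁻ y, (Q j₀) ((fun z => (z, y)) ⁻¹' (e.symm ⁻¹' A)) ∂mRest) +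
          ENNReal.ofReal d * mRest (qSet τ j₀) := by
          rw [lintegral_indicator_const (qSet_measurable τ j₀)]
  -- bound the rest measure
  have hrest : mRest (qSet τ j₀) ≤ ((n.factorial : ℝ≥0∞))⁻¹ := by
    refine le_trans (measure_mono (qSet_subset_sorted τ j₀)) ?_
    exact permuton_pi_sorted_le _ (fun l => hP _)
  have hint2 : (Measure.pi P) A ≤ (Measure.pi Q) A +
      ENNReal.ofReal (d * ((n.factorial : ℝ))⁻¹) := by
    refine le_trans hint (add_le_add_right ?_ _)
    calc ENNReal.ofReal d * mRest (qSet τ j₀)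
        ≤ ENNReal.ofReal d * ((n.factorial : ℝ≥0∞))⁻¹ := by
          exact mul_le_mul_right hrest _
      _ = ENNReal.ofReal (d * ((n.factorial : ℝ))⁻¹) := by
          rw [ENNReal.ofReal_mul hd0]
          congr 1
          rw [← ENNReal.ofReal_natCast n.factorial, ← ENNReal.ofReal_inv_of_pos]
          · exact_mod_cast n.factorial_pos
  -- conclude on reals
  haveI : IsProbabilityMeasure (Measure.pi P) := by
    constructor
    rw [← Set.pi_univ Set.univ, Measure.pi_pi]
    simp
  haveI : IsProbabilityMeasure (Measure.pi Q) := by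
    constructor
    rw [← Set.pi_univ Set.univ, Measure.pi_pi]
    simp
  have := ENNReal.toReal_mono ?_ hint2
  · rw [ENNReal.toReal_add (measure_ne_top _ _) ENNReal.ofReal_ne_top,
      ENNReal.toReal_ofReal (by positivity)] at this
    linarith
  · exact ENNReal.add_ne_top.2 ⟨measure_ne_top _ _, ENNReal.ofReal_ne_top⟩

lemma permCutDist_comm (μ ν : Measure (ℝ × ℝ)) : permCutDist μ ν = permCutDist ν μ := by
  unfold permCutDist
  congr 1
  ext y
  constructor
  · rintro ⟨a, b, c, d, ha, hb, hc, hd, rfl⟩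
    exact ⟨a, b, c, d, ha, hb, hc, hd, (abs_sub_comm _ _)⟩
  · rintro ⟨a, b, c, d, ha, hb, hc, hd, rfl⟩
    exact ⟨a, b, c, d, ha, hb, hc, hd, (abs_sub_comm _ _)⟩

lemma origSet_eq_patSet {k : ℕ} (τ : Equiv.Perm (Fin k)) :
    {x : Fin k → ℝ × ℝ | (∀ i j : Fin k, i < j → (x i).1 < (x j).1) ∧
        (∀ i j : Fin k, i < j → (x (τ⁻¹ i)).2 < (x (τ⁻¹ j)).2)} = patSet τ := by
  ext x
  simp only [Set.mem_setOf_eq, patSet]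
  constructor
  · rintro ⟨h1, h2⟩
    refine ⟨h1, fun i j hij => ?_⟩
    have := h2 (τ i) (τ j) hij
    simpa using this
  · rintro ⟨h1, h2⟩
    refine ⟨h1, fun i j hij => ?_⟩
    have := h2 (τ⁻¹ i) (τ⁻¹ j)
    simp only [Equiv.Perm.inv_def, Equiv.apply_symm_apply] at this
    exact this hij


theorem stmt14 {k : ℕ} (τ : Equiv.Perm (Fin k)) (μ ν : Measure (ℝ × ℝ))
    (hμ : IsPermuton μ) (hν : IsPermuton ν) :
    |permDensity τ μ - permDensity τ ν| ≤ (k : ℝ) ^ 2 * permCutDist μ ν := by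
  classical
  haveI := hμ.prob
  haveI := hν.prob
  obtain _ | n := k
  · -- k = 0
    have hset : {x : Fin 0 → ℝ × ℝ | (∀ i j : Fin 0, i < j → (x i).1 < (x j).1) ∧
        (∀ i j : Fin 0, i < j → (x (τ⁻¹ i)).2 < (x (τ⁻¹ j)).2)} = Set.univ := by
      ext x; simp only [Set.mem_setOf_eq, Set.mem_univ, iff_true]
      exact ⟨fun i => i.elim0, fun i => i.elim0⟩
    have h1 : (Measure.pi fun _ : Fin 0 => μ) Set.univ = 1 := by
      rw [← Set.pi_univ Set.univ, Measure.pi_pi]; simp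
    have h2 : (Measure.pi fun _ : Fin 0 => ν) Set.univ = 1 := by
      rw [← Set.pi_univ Set.univ, Measure.pi_pi]; simp
    simp only [permDensity, hset, h1, h2]
    norm_num
  · -- k = n + 1
    set d : ℝ := permCutDist μ ν with hd
    have hd0 : 0 ≤ d := permCutDist_nonneg hμ hν
    set fam : ℕ → Fin (n+1) → Measure (ℝ × ℝ) :=
      fun j i => if (i : ℕ) < j then μ else ν with hfam
    have hfamP : ∀ j i, IsPermuton (fam j i) := by
      intro j i; by_cases h : (i : ℕ) < j <;> simp [hfam, h, hμ, hν]
    set F : ℕ → ℝ := fun j => ((Measure.pi (fam j)) (patSet τ)).toReal with hF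
    have step : ∀ j, j < n + 1 → |F (j+1) - F j| ≤ d * ((n.factorial : ℝ))⁻¹ := by
      intro j hj
      set j₀ : Fin (n+1) := ⟨j, hj⟩ with hj₀
      have hPQ : ∀ i, i ≠ j₀ → fam (j+1) i = fam j i := by
        intro i hi
        have hne : (i : ℕ) ≠ j := fun h => hi (Fin.ext h)
        by_cases h : (i : ℕ) < j
        · simp [hfam, h, Nat.lt_succ_of_lt h]
        · have h2 : ¬(i : ℕ) < j + 1 := by omega
          simp [hfam, h, h2]
      have e1 : fam (j+1) j₀ = μ := by simp [hfam, hj₀]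
      have e2 : fam j j₀ = ν := by simp [hfam, hj₀]
      have h1 := swap_step τ j₀ (fam (j+1)) (fam j) (hfamP _) (hfamP _) hPQ
      have h2 := swap_step τ j₀ (fam j) (fam (j+1)) (hfamP _) (hfamP _)
        (fun i hi => (hPQ i hi).symm)
      rw [e1, e2] at h1
      rw [e1, e2, permCutDist_comm] at h2
      rw [abs_sub_le_iff]
      exact ⟨h1, h2⟩
    have habs : |F (n+1) - F 0| ≤ (n + 1 : ℝ) * (d * ((n.factorial : ℝ))⁻¹) := by
      calc |F (n+1) - F 0| = |∑ j ∈ Finset.range (n+1), (F (j+1) - F j)| := by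
            rw [Finset.sum_range_sub]
        _ ≤ ∑ j ∈ Finset.range (n+1), |F (j+1) - F j| := Finset.abs_sum_le_sum_abs _ _
        _ ≤ ∑ _j ∈ Finset.range (n+1), d * ((n.factorial : ℝ))⁻¹ :=
            Finset.sum_le_sum (fun j hj => step j (Finset.mem_range.1 hj))
        _ = (n + 1 : ℝ) * (d * ((n.factorial : ℝ))⁻¹) := by
            rw [Finset.sum_const, Finset.card_range, nsmul_eq_mul]
            push_cast
            ring
    have hμfam : (Measure.pi fun _ : Fin (n+1) => μ) = Measure.pi (fam (n+1)) := by
      congr 1; funext i; simp [hfam, i.isLt]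
    have hνfam : (Measure.pi fun _ : Fin (n+1) => ν) = Measure.pi (fam 0) := by
      congr 1
    have hdens : permDensity τ μ - permDensity τ ν =
        ((n+1).factorial : ℝ) * (F (n+1) - F 0) := by
      simp only [permDensity, origSet_eq_patSet, hμfam, hνfam, hF]
      ring
    have hfne : ((n.factorial : ℝ)) ≠ 0 := by
      exact_mod_cast n.factorial_ne_zero
    rw [hdens, abs_mul, abs_of_nonneg (by positivity : (0:ℝ) ≤ ((n+1).factorial : ℝ))]
    calc ((n+1).factorial : ℝ) * |F (n+1) - F 0|
        ≤ ((n+1).factorial : ℝ) * ((n + 1 : ℝ) * (d * ((n.factorial : ℝ))⁻¹)) :=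
          mul_le_mul_of_nonneg_left habs (by positivity)
      _ = ((n+1 : ℕ) : ℝ) ^ 2 * d := by
          rw [Nat.factorial_succ]
          push_cast
          field_simp
end
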